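/- Let Σ=(Γ=(V,E),σ) be a signed graph with an orientation ω compatible with σ and let G be a finite additive abelian group. Then the number of G-tensions of Σ equals |G|^{|V|−k_b(Σ)}, and the number of G-potential differences of Σ equals |G|^{|V|−k(Σ)} · |2G|^{k_u(Σ)}. -/

import Mathlib

attribute [local instance] Classical.propDecidable

noncomputable section SignedGraphs

/-- A signed graph: a multigraph with ordered pairs of endpoints (the order is
an artefact of the encoding) together with a sign `±1` on each edge. -/
structure SGraph (V : Type*) (E : Type*) where
  ends : E → V × V
  sign : E → ℤˣ

namespace SGraph

variable {V E : Type*}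

/-- Endpoint of `e` on side `b`; a loop has both endpoints equal, but its two
half-edges are distinguished by the side `b`. -/
def endpt (Γ : SGraph V E) (e : E) (b : Bool) : V :=
  cond b (Γ.ends e).1 (Γ.ends e).2

/-- `e` is a loop of the underlying graph. -/
def IsLoop (Γ : SGraph V E) (e : E) : Prop := (Γ.ends e).1 = (Γ.ends e).2

/-- Walks in a signed multigraph: a step traverses an edge `e` in direction `d`
(from the side-`d` endpoint to the other endpoint). -/
inductive Walk (Γ : SGraph V E) : V → V → Type _
  | nil (v : V) : Walk Γ v v
  | cons (e : E) (d : Bool) {w : V} (p : Walk Γ (Γ.endpt e (!d)) w) : Walk Γ (Γ.endpt e d) w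

namespace Walk

variable {Γ : SGraph V E}

/-- The list of vertices visited by a walk (including the final one). -/
def verts : ∀ {u v : V}, Γ.Walk u v → List V
  | _, _, .nil x => [x]
  | _, _, .cons e d p => Γ.endpt e d :: p.verts

/-- The list of edges traversed by a walk. -/
def edges : ∀ {u v : V}, Γ.Walk u v → List E
  | _, _, .nil _ => []
  | _, _, .cons e _ p => e :: p.edges

/-- The list of (edge, direction) steps of a walk. -/
def steps : ∀ {u v : V}, Γ.Walk u v → List (E × Bool)
  | _, _, .nil _ => []
  | _, _, .cons e d p => (e, d) :: p.steps

/-- The sources of the steps of a walk, i.e. all visited vertices except the last. -/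
def srcs {u v : V} (W : Γ.Walk u v) : List V := W.verts.dropLast

/-- The sign of a walk: the product of the signs of its edges. -/
def sgn : ∀ {u v : V}, Γ.Walk u v → ℤˣ
  | _, _, .nil _ => 1
  | _, _, .cons e _ p => Γ.sign e * p.sgn

/-- Concatenation of walks. -/
def append : ∀ {u v w : V}, Γ.Walk u v → Γ.Walk v w → Γ.Walk u w
  | _, _, _, .nil _, q => q
  | _, _, _, .cons e d p, q => .cons e d (p.append q)

/-- The sum `Σᵢ f(eᵢ)` of the values of `f` on the edges of the walk,
with multiplicity. -/
def edgeSum {G : Type*} [AddCommGroup G] (f : E → G) {u v : V} (W : Γ.Walk u v) : G :=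
  (W.edges.map f).sum

/-- The sum `Σᵢ ω(vᵢ,eᵢ)·(Π_{j<i} σ(eⱼ))·f(eᵢ)` along a walk, where `ω(vᵢ,eᵢ)`
is the value of `ω` on the half-edge by which the walk leaves `vᵢ`. -/
def tensionSum {G : Type*} [AddCommGroup G] (ω : E → Bool → ℤˣ) (f : E → G) :
    ∀ {u v : V}, Γ.Walk u v → G
  | _, _, .nil _ => 0
  | _, _, .cons e d p => ((ω e d : ℤ) • f e) + ((Γ.sign e : ℤ) • tensionSum ω f p)

/-- `Q` is the reverse of the walk `P`. -/
def IsReverseOf {u v : V} (Q : Γ.Walk v u) (P : Γ.Walk u v) : Prop :=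
  Q.steps = P.steps.reverse.map fun s => (s.1, !s.2)

end Walk

/-- A closed walk is a cycle if it is nontrivial, visits no vertex twice and
uses no edge twice. -/
def IsCycle (Γ : SGraph V E) {v : V} (W : Γ.Walk v v) : Prop :=
  W.edges ≠ [] ∧ W.srcs.Nodup ∧ W.edges.Nodup

/-- A balanced (positive) cycle. -/
def IsBalancedCycle (Γ : SGraph V E) {v : V} (W : Γ.Walk v v) : Prop :=
  Γ.IsCycle W ∧ W.sgn = 1

/-- An unbalanced (negative) cycle. -/
def IsUnbalancedCycle (Γ : SGraph V E) {v : V} (W : Γ.Walk v v) : Prop :=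
  Γ.IsCycle W ∧ W.sgn = -1

/-- A nontrivial walk that is a simple path (all visited vertices distinct). -/
def IsPathWalk (Γ : SGraph V E) {u v : V} (P : Γ.Walk u v) : Prop :=
  P.edges ≠ [] ∧ P.verts.Nodup

/-- A tight handcuff at `v`: two edge-disjoint unbalanced cycles sharing exactly
the vertex `v`. -/
def IsTightHandcuff (Γ : SGraph V E) {v : V} (C₁ C₂ : Γ.Walk v v) : Prop :=
  Γ.IsUnbalancedCycle C₁ ∧ Γ.IsUnbalancedCycle C₂ ∧
    (∀ x ∈ C₁.srcs, x ∈ C₂.srcs → x = v) ∧ ∀ e ∈ C₁.edges, e ∉ C₂.edges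

/-- A loose handcuff: two vertex-disjoint unbalanced cycles `C₁` (at `u`) and
`C₂` (at `w`) joined by a simple path `P` from `u` to `w` meeting the cycles
exactly in its endpoints. -/
def IsLooseHandcuff (Γ : SGraph V E) {u w : V} (C₁ : Γ.Walk u u) (P : Γ.Walk u w)
    (C₂ : Γ.Walk w w) : Prop :=
  Γ.IsUnbalancedCycle C₁ ∧ Γ.IsUnbalancedCycle C₂ ∧ Γ.IsPathWalk P ∧
    (∀ x ∈ C₁.srcs, x ∉ C₂.srcs) ∧
    (∀ x ∈ P.verts, x ∈ C₁.srcs → x = u) ∧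
    (∀ x ∈ P.verts, x ∈ C₂.srcs → x = w) ∧
    ∀ e ∈ P.edges, e ∉ C₁.edges ∧ e ∉ C₂.edges

/-- The canonical closed walks traversing a circuit of the signed graph:
a balanced cycle, a tight handcuff `C₁ * C₂`, or a loose handcuff
`C₁ * P * C₂ * P⁻¹` (the circuit path edges being used twice). -/
def IsBasicCircuitWalk (Γ : SGraph V E) {v : V} (W : Γ.Walk v v) : Prop :=
  Γ.IsBalancedCycle W ∨
    (∃ C₁ C₂ : Γ.Walk v v, Γ.IsTightHandcuff C₁ C₂ ∧ W = C₁.append C₂) ∨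
    ∃ (w : V) (C₁ : Γ.Walk v v) (P : Γ.Walk v w) (C₂ : Γ.Walk w w) (Q : Γ.Walk w v),
      Γ.IsLooseHandcuff C₁ P C₂ ∧ Q.IsReverseOf P ∧
        W = C₁.append (P.append (C₂.append Q))

/-- A circuit walk: a rotation of a basic circuit walk. -/
def IsCircuitWalk (Γ : SGraph V E) {v : V} (W : Γ.Walk v v) : Prop :=
  ∃ (u : V) (A : Γ.Walk u v) (B : Γ.Walk v u),
    W = B.append A ∧ Γ.IsBasicCircuitWalk (A.append B)

/-- `e` is a circuit path edge: it lies on the connecting path of an unbalanced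
loose handcuff. -/
def IsCircuitPathEdge (Γ : SGraph V E) (e : E) : Prop :=
  ∃ (u w : V) (C₁ : Γ.Walk u u) (P : Γ.Walk u w) (C₂ : Γ.Walk w w),
    Γ.IsLooseHandcuff C₁ P C₂ ∧ e ∈ P.edges

/-- Adjacency via an edge. -/
def Adj (Γ : SGraph V E) (a b : V) : Prop := ∃ e, Γ.ends e = (a, b) ∨ Γ.ends e = (b, a)

/-- The set of connected components. -/
def Components (Γ : SGraph V E) : Type _ := Quot Γ.Adj

/-- The connected component of a vertex. -/
def comp (Γ : SGraph V E) (v : V) : Γ.Components := Quot.mk _ v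

/-- The number `k(Γ)` of connected components. -/
def kAll (Γ : SGraph V E) : ℕ := Nat.card Γ.Components

/-- A connected component is balanced if every cycle it contains is balanced. -/
def IsBalancedComponent (Γ : SGraph V E) (c : Γ.Components) : Prop :=
  ∀ v : V, Γ.comp v = c → ∀ W : Γ.Walk v v, Γ.IsCycle W → W.sgn = 1

/-- The number `k_b(Σ)` of balanced connected components. -/
def kb (Γ : SGraph V E) : ℕ := Nat.card {c : Γ.Components // Γ.IsBalancedComponent c}

/-- The number `k_u(Σ)` of unbalanced connected components. -/
def ku (Γ : SGraph V E) : ℕ := Nat.card {c : Γ.Components // ¬ Γ.IsBalancedComponent c}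

/-- A signed graph is balanced if all its cycles are balanced. -/
def Balanced (Γ : SGraph V E) : Prop :=
  ∀ (v : V) (W : Γ.Walk v v), Γ.IsCycle W → W.sgn = 1

/-- A signed graph is connected if it has exactly one connected component. -/
def Connected (Γ : SGraph V E) : Prop := Γ.kAll = 1

/-- The spanning subgraph `Σ \ Aᶜ` with edge set `A`. -/
def restrict (Γ : SGraph V E) (A : Set E) : SGraph V A :=
  { ends := fun e => Γ.ends e, sign := fun e => Γ.sign e }

/-- The signed Tutte polynomial (as a function of `x`, `y`, `z`):
`T_Σ(X,Y,Z) = Σ_{A⊆E} (X−1)^{k(Σ\Aᶜ)−k(Σ)} (Y−1)^{|A|−|V|+k_b(Σ\Aᶜ)} (Z−1)^{k_u(Σ\Aᶜ)}`. -/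
def signedTutte {K : Type*} [CommRing K] (Γ : SGraph V E) (x y z : K) : K :=
  ∑ᶠ A : Finset E,
    (x - 1) ^ ((Γ.restrict (A : Set E)).kAll - Γ.kAll) *
      (y - 1) ^ ((A.card + (Γ.restrict (A : Set E)).kb) - Nat.card V) *
        (z - 1) ^ (Γ.restrict (A : Set E)).ku

/-- Deletion of an edge. -/
def deleteEdge (Γ : SGraph V E) (e : E) : SGraph V {e' : E // e' ≠ e} :=
  { ends := fun e' => Γ.ends e'.1, sign := fun e' => Γ.sign e'.1 }

/-- The relation identifying the two endpoints of `e`. -/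
def contractRel (Γ : SGraph V E) (e : E) (a b : V) : Prop := (a, b) = Γ.ends e

/-- Contraction of an edge: the two endpoints are identified and the edge is
deleted.  (For a loop this is just deletion, as the identification is trivial.) -/
def contract (Γ : SGraph V E) (e : E) : SGraph (Quot (Γ.contractRel e)) {e' : E // e' ≠ e} :=
  { ends := fun e' => (Quot.mk _ (Γ.ends e'.1).1, Quot.mk _ (Γ.ends e'.1).2),
    sign := fun e' => Γ.sign e'.1 }

/-- `e` is a bridge: its deletion increases the number of connected components. -/
def IsBridge (Γ : SGraph V E) (e : E) : Prop := Γ.kAll < (Γ.deleteEdge e).kAll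

/-- An orientation of the half-edges, compatible with the signature. -/
def IsCompatible (Γ : SGraph V E) (ω : E → Bool → ℤˣ) : Prop :=
  ∀ e, Γ.sign e = -(ω e true * ω e false)

/-- A `G`-flow: Kirchhoff's law holds at every vertex. -/
def IsFlow (Γ : SGraph V E) (ω : E → Bool → ℤˣ) {G : Type*} [AddCommGroup G]
    (f : E → G) : Prop :=
  ∀ v : V,
    (∑ᶠ e : E, ((if Γ.endpt e true = v then (ω e true : ℤ) • f e else 0) +
      (if Γ.endpt e false = v then (ω e false : ℤ) • f e else 0))) = 0

/-- A `G`-tension: the alternating sum along every circuit walk vanishes. -/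
def IsTension (Γ : SGraph V E) (ω : E → Bool → ℤˣ) {G : Type*} [AddCommGroup G]
    (f : E → G) : Prop :=
  ∀ (v : V) (W : Γ.Walk v v), Γ.IsCircuitWalk W → W.tensionSum ω f = 0

end SGraph

/-- The doubling homomorphism `x ↦ x + x = 2x` of an abelian group. -/
def doubleHom (G : Type*) [AddCommGroup G] : G →+ G :=
  AddMonoidHom.mk' (fun x => x + x) (fun a b => add_add_add_comm a b a b)

/-- The subgroup `2G = {2x : x ∈ G}`. -/
def twoG (G : Type*) [AddCommGroup G] : AddSubgroup G := (doubleHom G).range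

/-- The `2`-torsion subgroup `G₂ = {x ∈ G : 2x = 0}`. -/
def torsion2 (G : Type*) [AddCommGroup G] : AddSubgroup G := (doubleHom G).ker

namespace SGraph

variable {V E : Type*}

/-- A `G`-potential difference: a `G`-tension whose sum around every unbalanced
cycle lies in `2G`. -/
def IsPotentialDifference (Γ : SGraph V E) (ω : E → Bool → ℤˣ) {G : Type*} [AddCommGroup G]
    (f : E → G) : Prop :=
  Γ.IsTension ω f ∧
    ∀ (v : V) (W : Γ.Walk v v), Γ.IsUnbalancedCycle W → W.edgeSum f ∈ twoG G

end SGraph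

namespace SGraph

variable {V E : Type*}

/-- Proper coloring by elements of a set `X` with involution `ι`: adjacent
endpoints of a positive edge get different colors, and for a negative edge the
`ι`-image of one endpoint's color differs from the other endpoint's color. -/
def IsProperInvColoring (Γ : SGraph V E) {X : Type*} (ι : X → X) (f : V → X) : Prop :=
  ∀ e : E, (Γ.sign e = 1 → f ((Γ.ends e).1) ≠ f ((Γ.ends e).2)) ∧
    (Γ.sign e = -1 → ι (f ((Γ.ends e).1)) ≠ f ((Γ.ends e).2))

/-- A proper `G`-coloring: for every edge `e = uv`, `f(u) ≠ f(v)` if `e` is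
positive and `-f(u) ≠ f(v)` if `e` is negative, i.e. `σ(e)•f(u) ≠ f(v)`. -/
def IsProperColoring (Γ : SGraph V E) {G : Type*} [AddCommGroup G] (f : V → G) : Prop :=
  ∀ e : E, ((Γ.sign e : ℤ) • f ((Γ.ends e).1)) ≠ f ((Γ.ends e).2)

/-- Zaslavsky's proper `n`-coloring: colors in `{0, ±1, …, ±n}` with
`f(u) ≠ σ(e)·f(v)` for every edge `e = uv`. -/
def IsProperNColoring (Γ : SGraph V E) (n : ℕ) (f : V → ℤ) : Prop :=
  (∀ v, |f v| ≤ (n : ℤ)) ∧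
    ∀ e : E, f ((Γ.ends e).1) ≠ (Γ.sign e : ℤ) * f ((Γ.ends e).2)

/-- `T ⊆ E` is a spanning tree: the spanning subgraph `(V,T)` is connected and
contains no cycle. -/
def IsSpanningTree (Γ : SGraph V E) (T : Set E) : Prop :=
  (Γ.restrict T).Connected ∧
    ∀ (v : V) (W : (Γ.restrict T).Walk v v), ¬ (Γ.restrict T).IsCycle W

/-- A connected basis of a connected signed graph: a spanning tree if `Σ` is
balanced; otherwise a spanning tree plus one extra edge closing an unbalanced
cycle. -/
def IsConnectedBasis (Γ : SGraph V E) (B : Set E) : Prop :=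
  (Γ.Balanced ∧ Γ.IsSpanningTree B) ∨
    (¬ Γ.Balanced ∧ ∃ (T : Set E) (e : E), Γ.IsSpanningTree T ∧ e ∉ T ∧ B = insert e T ∧
      ∀ (v : V) (W : (Γ.restrict B).Walk v v), (Γ.restrict B).IsCycle W → W.sgn = -1)

/-- Switching at a vertex `v`: the sign of every non-loop edge incident with `v`
is negated; loops keep their sign. -/
def switchAt (Γ : SGraph V E) (v : V) : SGraph V E :=
  { ends := Γ.ends,
    sign := fun e => if ((Γ.ends e).1 = v ↔ (Γ.ends e).2 = v) then Γ.sign e else -Γ.sign e }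

/-- Switching at a set `S` of vertices (the composite of the switchings at the
vertices of `S`): the sign of an edge is negated iff exactly one of its
endpoints lies in `S`. -/
def switchSet (Γ : SGraph V E) (S : Set V) : SGraph V E :=
  { ends := Γ.ends,
    sign := fun e => if ((Γ.ends e).1 ∈ S ↔ (Γ.ends e).2 ∈ S) then Γ.sign e else -Γ.sign e }

/-- Isomorphism of signed graphs (as undirected signed multigraphs). -/
def Iso {V₁ E₁ V₂ E₂ : Type*} (Γ₁ : SGraph V₁ E₁) (Γ₂ : SGraph V₂ E₂) : Prop :=
  ∃ (φ : V₁ ≃ V₂) (ψ : E₁ ≃ E₂), ∀ e : E₁,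
    (Γ₂.ends (ψ e) = (φ (Γ₁.ends e).1, φ (Γ₁.ends e).2) ∨
      Γ₂.ends (ψ e) = (φ (Γ₁.ends e).2, φ (Γ₁.ends e).1)) ∧
    Γ₂.sign (ψ e) = Γ₁.sign e

/-- Switching equivalence: isomorphism after switching at a set of vertices. -/
def SwitchEquiv {V₁ E₁ V₂ E₂ : Type*} (Γ₁ : SGraph V₁ E₁) (Γ₂ : SGraph V₂ E₂) : Prop :=
  ∃ S : Set V₁, Iso (Γ₁.switchSet S) Γ₂

/-- Disjoint union of signed graphs. -/
def disjUnion {V₁ E₁ V₂ E₂ : Type*} (Γ₁ : SGraph V₁ E₁) (Γ₂ : SGraph V₂ E₂) :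
    SGraph (V₁ ⊕ V₂) (E₁ ⊕ E₂) where
  ends := fun e => match e with
    | .inl e => (Sum.inl (Γ₁.ends e).1, Sum.inl (Γ₁.ends e).2)
    | .inr e => (Sum.inr (Γ₂.ends e).1, Sum.inr (Γ₂.ends e).2)
  sign := fun e => match e with
    | .inl e => Γ₁.sign e
    | .inr e => Γ₂.sign e

/-- The difference operator `δ : G^V → G^E`,
`(δg)(e) = ω(v,e)·g(v) + ω(u,e)·g(u)` for `e = uv`. -/
def deltaHom (Γ : SGraph V E) (ω : E → Bool → ℤˣ) (G : Type*) [AddCommGroup G] :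
    (V → G) →+ (E → G) :=
  AddMonoidHom.mk'
    (fun g e => (ω e true : ℤ) • g ((Γ.ends e).1) + (ω e false : ℤ) • g ((Γ.ends e).2))
    (by
      intro a b
      funext e
      simp only [Pi.add_apply, smul_add]
      abel)

end SGraph

end SignedGraphs



/-! ### Auxiliary development for the counting theorem -/

section AuxLists

open SGraph

namespace SGraph

variable {V E : Type} (Γ : SGraph V E)

/-- Source of a step. -/
def stepSrc (s : E × Bool) : V := Γ.endpt s.1 s.2

/-- Target of a step. -/
def stepTgt (s : E × Bool) : V := Γ.endpt s.1 (!s.2)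

/-- Validity of a list of steps as a walk from `u` to `v`. -/
def IsWL (Γ : SGraph V E) : List (E × Bool) → V → V → Prop
  | [], u, v => u = v
  | s :: l, u, v => u = Γ.stepSrc s ∧ IsWL Γ l (Γ.stepTgt s) v

/-- Sign of a list of steps. -/
def sgnL (l : List (E × Bool)) : ℤˣ := (l.map fun s => Γ.sign s.1).prod

/-- Reversal of a list of steps. -/
def revL (l : List (E × Bool)) : List (E × Bool) :=
  l.reverse.map fun s => (s.1, !s.2)

variable {G : Type} [AddCommGroup G]

/-- Tension sum along a list of steps. -/
def tsumL (Γ : SGraph V E) (ω : E → Bool → ℤˣ) (f : E → G) : List (E × Bool) → G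
  | [] => 0
  | s :: l => ((ω s.1 s.2 : ℤ) • f s.1) + ((Γ.sign s.1 : ℤ) • tsumL Γ ω f l)

variable {Γ}

@[simp] lemma isWL_nil {u v : V} : Γ.IsWL [] u v ↔ u = v := Iff.rfl

@[simp] lemma isWL_cons {s : E × Bool} {l : List (E × Bool)} {u v : V} :
    Γ.IsWL (s :: l) u v ↔ u = Γ.stepSrc s ∧ Γ.IsWL l (Γ.stepTgt s) v := Iff.rfl

@[simp] lemma sgnL_nil : Γ.sgnL ([] : List (E × Bool)) = 1 := rfl

@[simp] lemma sgnL_cons {s : E × Bool} {l : List (E × Bool)} :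
    Γ.sgnL (s :: l) = Γ.sign s.1 * Γ.sgnL l := by
  simp [SGraph.sgnL]

@[simp] lemma sgnL_append {l₁ l₂ : List (E × Bool)} :
    Γ.sgnL (l₁ ++ l₂) = Γ.sgnL l₁ * Γ.sgnL l₂ := by
  simp [SGraph.sgnL]

lemma sgnL_perm {l₁ l₂ : List (E × Bool)} (h : l₁.Perm l₂) : Γ.sgnL l₁ = Γ.sgnL l₂ :=
  (h.map _).prod_eq

@[simp] lemma sgnL_revL {l : List (E × Bool)} : Γ.sgnL (revL l) = Γ.sgnL l := by
  have h : List.Perm (revL l) (l.map fun s => (s.1, !s.2)) := by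
    simpa [revL] using ((l.map fun s => (s.1, !s.2)).reverse_perm)
  rw [sgnL_perm h]
  simp only [SGraph.sgnL, List.map_map]
  rfl

lemma isWL_append {l₁ l₂ : List (E × Bool)} {u v : V} :
    Γ.IsWL (l₁ ++ l₂) u v ↔ ∃ w, Γ.IsWL l₁ u w ∧ Γ.IsWL l₂ w v := by
  induction l₁ generalizing u with
  | nil => simp
  | cons s l ih => simp [ih, and_assoc]

lemma IsWL.append {l₁ l₂ : List (E × Bool)} {u w v : V} (h₁ : Γ.IsWL l₁ u w)
    (h₂ : Γ.IsWL l₂ w v) : Γ.IsWL (l₁ ++ l₂) u v :=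
  isWL_append.2 ⟨w, h₁, h₂⟩

@[simp] lemma stepSrc_flip {s : E × Bool} : Γ.stepSrc (s.1, !s.2) = Γ.stepTgt s := rfl

@[simp] lemma stepTgt_flip {s : E × Bool} : Γ.stepTgt (s.1, !s.2) = Γ.stepSrc s := by
  simp [SGraph.stepTgt, SGraph.stepSrc]

@[simp] lemma revL_nil : revL ([] : List (E × Bool)) = [] := rfl

lemma revL_cons {s : E × Bool} {l : List (E × Bool)} :
    revL (s :: l) = revL l ++ [(s.1, !s.2)] := by
  simp [revL]

lemma revL_append {l₁ l₂ : List (E × Bool)} :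
    revL (l₁ ++ l₂) = revL l₂ ++ revL l₁ := by
  simp [revL]

@[simp] lemma revL_revL {l : List (E × Bool)} : revL (revL l) = l := by
  induction l with
  | nil => rfl
  | cons s l ih =>
    rw [revL_cons, revL_append, ih]
    simp [revL]

lemma IsWL.revL {l : List (E × Bool)} {u v : V} (h : Γ.IsWL l u v) :
    Γ.IsWL (revL l) v u := by
  induction l generalizing u with
  | nil => exact h.symm
  | cons s l ih =>
    rw [revL_cons]
    exact (ih h.2).append ⟨rfl, by simpa using h.1.symm⟩

@[simp] lemma edges_revL {l : List (E × Bool)} :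
    (revL l).map Prod.fst = (l.map Prod.fst).reverse := by
  simp [revL]

variable (ω : E → Bool → ℤˣ) (f g : E → G)

@[simp] lemma tsumL_nil : Γ.tsumL ω f [] = 0 := rfl

lemma tsumL_cons {s : E × Bool} {l : List (E × Bool)} :
    Γ.tsumL ω f (s :: l) = ((ω s.1 s.2 : ℤ) • f s.1) + ((Γ.sign s.1 : ℤ) • Γ.tsumL ω f l) := rfl

lemma tsumL_append (l₁ l₂ : List (E × Bool)) :
    Γ.tsumL ω f (l₁ ++ l₂) = Γ.tsumL ω f l₁ + ((Γ.sgnL l₁ : ℤ) • Γ.tsumL ω f l₂) := by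
  induction l₁ with
  | nil => simp
  | cons s l ih =>
    simp only [List.cons_append, tsumL_cons, ih, sgnL_cons, smul_add, add_assoc]
    congr 1
    push_cast
    rw [mul_smul]

lemma tsumL_zero (l : List (E × Bool)) (hf : ∀ e ∈ l.map Prod.fst, f e = 0) :
    Γ.tsumL ω f l = 0 := by
  induction l with
  | nil => rfl
  | cons s l ih =>
    rw [tsumL_cons, hf s.1 (by simp), ih fun e he => hf e (by simp [he])]
    simp

lemma tsumL_sub (l : List (E × Bool)) :
    Γ.tsumL ω (f - g) l = Γ.tsumL ω f l - Γ.tsumL ω g l := by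
  induction l with
  | nil => simp
  | cons s l ih =>
    simp only [tsumL_cons, ih, Pi.sub_apply, smul_sub]
    abel


lemma units_sq (u : ℤˣ) : u * u = 1 := by
  rcases Int.units_eq_one_or u with h | h <;> simp [h]

lemma units_smul_smul (u : ℤˣ) (x : G) : (u : ℤ) • (u : ℤ) • x = x := by
  rcases Int.units_eq_one_or u with h | h <;> simp [h]

lemma omega_not {ω : E → Bool → ℤˣ} (hω : Γ.IsCompatible ω) (e : E) (d : Bool) :
    ω e (!d) = -(Γ.sign e * ω e d) := by
  have h := hω e
  rcases Int.units_eq_one_or (ω e true) with h1 | h1 <;>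
    rcases Int.units_eq_one_or (ω e false) with h2 | h2 <;>
      cases d <;> simp_all

lemma tsumL_revL {ω : E → Bool → ℤˣ} (hω : Γ.IsCompatible ω) (l : List (E × Bool)) :
    Γ.tsumL ω f (revL l) = -((Γ.sgnL l : ℤ) • Γ.tsumL ω f l) := by
  induction l with
  | nil => simp
  | cons s l ih =>
    rw [revL_cons, tsumL_append, ih, sgnL_revL]
    have h1 : Γ.tsumL ω f [(s.1, !s.2)] = ((ω s.1 (!s.2) : ℤ) • f s.1) := by
      rw [tsumL_cons]; simp
    rw [h1, omega_not hω, tsumL_cons, sgnL_cons]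
    rcases Int.units_eq_one_or (Γ.sign s.1) with h2 | h2 <;>
      rcases Int.units_eq_one_or (ω s.1 s.2) with h3 | h3 <;>
        rcases Int.units_eq_one_or (Γ.sgnL l) with h4 | h4 <;>
          simp [h2, h3, h4] <;> abel

@[simp] lemma doubleHom_apply (x : G) : doubleHom G x = x + x := rfl

lemma mem_twoG_iff {x : G} : x ∈ twoG G ↔ ∃ y, y + y = x := Iff.rfl

lemma neg_mem_twoG {x : G} (h : x ∈ twoG G) : -x ∈ twoG G := (twoG G).neg_mem h

lemma unit_smul_sub_mem (u : ℤˣ) (x : G) : (u : ℤ) • x - x ∈ twoG G := by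
  rcases Int.units_eq_one_or u with h | h
  · simp [h]
  · refine ⟨-x, by simp [h]; abel⟩

lemma tsumL_sub_sum_mem (ω : E → Bool → ℤˣ) (l : List (E × Bool)) :
    Γ.tsumL ω f l - (l.map fun s => f s.1).sum ∈ twoG G := by
  induction l with
  | nil => simpa using (twoG G).zero_mem
  | cons s l ih =>
    have h1 := unit_smul_sub_mem (G := G) (ω s.1 s.2) (f s.1)
    have h2 := unit_smul_sub_mem (G := G) (Γ.sign s.1) (Γ.tsumL ω f l)
    have key : Γ.tsumL ω f (s :: l) - ((s :: l).map fun s => f s.1).sum =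
        (((ω s.1 s.2 : ℤ) • f s.1 - f s.1) + ((Γ.sign s.1 : ℤ) • Γ.tsumL ω f l
          - Γ.tsumL ω f l)) + (Γ.tsumL ω f l - (l.map fun s => f s.1).sum) := by
      rw [tsumL_cons]
      simp only [List.map_cons, List.sum_cons]
      abel
    rw [key]
    exact (twoG G).add_mem ((twoG G).add_mem h1 h2) ih

lemma tsumL_single (ω : E → Bool → ℤˣ) (e : E) :
    ∀ l : List (E × Bool), e ∈ l.map Prod.fst → (l.map Prod.fst).Nodup →
    (∀ g ∈ l.map Prod.fst, g ≠ e → f g = 0) →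
    ∃ u : ℤˣ, Γ.tsumL ω f l = (u : ℤ) • f e := by
  intro l
  induction l with
  | nil => simp
  | cons s l ih =>
    intro hmem hnd hf
    by_cases hc : s.1 = e
    · have hrest : Γ.tsumL ω f l = 0 := by
        refine tsumL_zero _ _ _ fun g hg => hf g (by simp [hg]) ?_
        rintro rfl
        rw [← hc] at hg
        rw [List.map_cons, List.nodup_cons] at hnd
        exact hnd.1 hg
      refine ⟨ω s.1 s.2, ?_⟩
      rw [tsumL_cons, hrest, hc]
      simp
    · have h0 : f s.1 = 0 := hf s.1 (by simp) hc
      have hmem' : e ∈ l.map Prod.fst := by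
        rcases (by simpa using hmem) with h | h
        · exact absurd h.symm hc
        · simpa using h
      obtain ⟨u, hu⟩ := ih hmem' (by
        rw [List.map_cons, List.nodup_cons] at hnd; exact hnd.2)
        (fun g hg => hf g (by simp [hg]))
      refine ⟨Γ.sign s.1 * u, ?_⟩
      rw [tsumL_cons, h0, hu]
      push_cast
      rw [mul_smul]
      simp

/-- First hit decomposition of a walk list at a predicate. -/
lemma exists_firstHit (P : V → Prop) :
    ∀ (l : List (E × Bool)) (u v : V), Γ.IsWL l u v →
      (P v ∨ ∃ x ∈ l.map Γ.stepSrc, P x) →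
      ∃ l₁ l₂ w, l = l₁ ++ l₂ ∧ Γ.IsWL l₁ u w ∧ Γ.IsWL l₂ w v ∧ P w ∧
        ∀ x ∈ l₁.map Γ.stepSrc, ¬ P x := by
  intro l
  induction l with
  | nil =>
    intro u v h hp
    refine ⟨[], [], v, by simp, by simpa using h, rfl, ?_, by simp⟩
    rcases hp with hp | hp
    · exact hp
    · simp at hp
  | cons s l ih =>
    intro u v h hp
    by_cases hP : P (Γ.stepSrc s)
    · exact ⟨[], s :: l, u, by simp, rfl, h, h.1 ▸ hP, by simp⟩
    · have hp' : P v ∨ ∃ x ∈ l.map Γ.stepSrc, P x := by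
        rcases hp with hp | hp
        · exact Or.inl hp
        · rcases hp with ⟨x, hx, hPx⟩
          rcases (by simpa using hx) with h' | h'
          · exact absurd (h' ▸ hPx) hP
          · exact Or.inr ⟨x, by simpa using h', hPx⟩
      obtain ⟨l₁, l₂, w, heq, h1, h2, hw, hno⟩ := ih (Γ.stepTgt s) v h.2 hp'
      refine ⟨s :: l₁, l₂, w, by rw [heq]; simp, ⟨h.1, h1⟩, h2, hw, ?_⟩
      intro x hx
      rcases (by simpa using hx) with h' | h'
      · exact h' ▸ hP
      · exact hno x (by simpa using h')

/-- Split a walk list at a vertex occurring as a source. -/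
lemma exists_split_at_src {x : V} :
    ∀ (l : List (E × Bool)) (u v : V), Γ.IsWL l u v → x ∈ l.map Γ.stepSrc →
      ∃ l₁ l₂, l = l₁ ++ l₂ ∧ Γ.IsWL l₁ u x ∧ Γ.IsWL l₂ x v ∧ x ∈ l₂.map Γ.stepSrc := by
  intro l
  induction l with
  | nil => simp
  | cons s l ih =>
    intro u v h hx
    by_cases hc : Γ.stepSrc s = x
    · exact ⟨[], s :: l, by simp, by simpa using h.1.trans hc,
        ⟨hc.symm, h.2⟩, by simp [hc]⟩
    · have hx' : x ∈ l.map Γ.stepSrc := by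
        rcases (by simpa using hx) with h' | h'
        · exact absurd h'.symm hc
        · simpa using h'
      obtain ⟨l₁, l₂, heq, h1, h2, hmem⟩ := ih (Γ.stepTgt s) v h.2 hx'
      exact ⟨s :: l₁, l₂, by rw [heq]; simp, ⟨h.1, h1⟩, h2, hmem⟩


/-! ### Bridging between `Walk`s and step lists -/

lemma Walk.steps_isWL : ∀ {u v : V} (W : Γ.Walk u v), Γ.IsWL W.steps u v
  | _, _, .nil _ => rfl
  | _, _, .cons e d p => ⟨rfl, p.steps_isWL⟩

lemma Walk.sgn_eq_sgnL : ∀ {u v : V} (W : Γ.Walk u v), W.sgn = Γ.sgnL W.steps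
  | _, _, .nil _ => rfl
  | _, _, .cons e d p => by
    rw [Walk.sgn, Walk.steps, sgnL_cons, p.sgn_eq_sgnL]

lemma Walk.tensionSum_eq_tsumL (ω : E → Bool → ℤˣ) (f : E → G) :
    ∀ {u v : V} (W : Γ.Walk u v), W.tensionSum ω f = Γ.tsumL ω f W.steps
  | _, _, .nil _ => rfl
  | _, _, .cons e d p => by
    rw [Walk.tensionSum, Walk.steps, tsumL_cons, p.tensionSum_eq_tsumL]

lemma Walk.edges_eq : ∀ {u v : V} (W : Γ.Walk u v), W.edges = W.steps.map Prod.fst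
  | _, _, .nil _ => rfl
  | _, _, .cons e d p => by
    rw [Walk.edges, Walk.steps, List.map_cons, p.edges_eq]

lemma Walk.edgeSum_eq (f : E → G) {u v : V} (W : Γ.Walk u v) :
    W.edgeSum f = (W.steps.map fun s => f s.1).sum := by
  rw [Walk.edgeSum, W.edges_eq, List.map_map]
  rfl

lemma Walk.verts_eq : ∀ {u v : V} (W : Γ.Walk u v),
    W.verts = W.steps.map Γ.stepSrc ++ [v]
  | _, _, .nil _ => rfl
  | _, _, .cons e d p => by
    rw [Walk.verts, Walk.steps, List.map_cons, p.verts_eq]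
    rfl

lemma Walk.srcs_eq {u v : V} (W : Γ.Walk u v) : W.srcs = W.steps.map Γ.stepSrc := by
  rw [Walk.srcs, W.verts_eq, List.dropLast_concat]

lemma Walk.steps_append : ∀ {u v w : V} (p : Γ.Walk u v) (q : Γ.Walk v w),
    (p.append q).steps = p.steps ++ q.steps
  | _, _, _, .nil _, q => rfl
  | _, _, _, .cons e d p, q => by
    rw [Walk.append, Walk.steps, Walk.steps, List.cons_append, Walk.steps_append p q]

lemma Walk.append_nil : ∀ {u v : V} (p : Γ.Walk u v), p.append (.nil v) = p
  | _, _, .nil _ => rfl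
  | _, _, .cons e d p => by rw [Walk.append, p.append_nil]

/-- Build a walk from a valid step list. -/
def toWalk : ∀ (l : List (E × Bool)) (u v : V), Γ.IsWL l u v → Γ.Walk u v
  | [], u, _, h => h ▸ Walk.nil u
  | s :: l, _, v, h =>
    h.1 ▸ (Walk.cons s.1 s.2 (toWalk l (Γ.stepTgt s) v h.2) : Γ.Walk (Γ.stepSrc s) v)

lemma steps_toWalk (l : List (E × Bool)) : ∀ (u v : V) (h : Γ.IsWL l u v),
    (Γ.toWalk l u v h).steps = l := by
  induction l with
  | nil => intro u v h; subst h; rfl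
  | cons s l ih =>
    intro u v h
    obtain ⟨h1, h2⟩ := h
    subst h1
    show (Walk.cons s.1 s.2 (Γ.toWalk l (Γ.stepTgt s) v h2)).steps = s :: l
    exact congrArg (List.cons (s.1, s.2)) (ih _ _ h2)

lemma toWalk_append (l₁ l₂ : List (E × Bool)) :
    ∀ (u w v : V) (h₁ : Γ.IsWL l₁ u w) (h₂ : Γ.IsWL l₂ w v) (h : Γ.IsWL (l₁ ++ l₂) u v),
      Γ.toWalk (l₁ ++ l₂) u v h = (Γ.toWalk l₁ u w h₁).append (Γ.toWalk l₂ w v h₂) := by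
  induction l₁ with
  | nil =>
    intro u w v h₁ h₂ h
    subst h₁
    rfl
  | cons s l ih =>
    intro u w v h₁ h₂ h
    obtain ⟨e1, h₁'⟩ := h₁
    subst e1
    obtain ⟨e2, h'⟩ := h
    show Walk.cons s.1 s.2 _ = Walk.append (Walk.cons s.1 s.2 _) _
    exact congrArg (Walk.cons s.1 s.2) (ih _ _ _ h₁' h₂ h')

lemma sgn_toWalk (l : List (E × Bool)) (u v : V) (h : Γ.IsWL l u v) :
    (Γ.toWalk l u v h).sgn = Γ.sgnL l := by
  rw [Walk.sgn_eq_sgnL, steps_toWalk]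

lemma isCycle_toWalk (l : List (E × Bool)) (v : V) (h : Γ.IsWL l v v) (hne : l ≠ [])
    (hs : (l.map Γ.stepSrc).Nodup) (he : (l.map Prod.fst).Nodup) :
    Γ.IsCycle (Γ.toWalk l v v h) := by
  refine ⟨?_, ?_, ?_⟩
  · rw [Walk.edges_eq, steps_toWalk]
    simpa using hne
  · rw [Walk.srcs_eq, steps_toWalk]
    exact hs
  · rw [Walk.edges_eq, steps_toWalk]
    exact he

lemma isCircuitWalk_of_self {v : V} (W : Γ.Walk v v) (h : Γ.IsBasicCircuitWalk W) :
    Γ.IsCircuitWalk W := by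
  refine ⟨v, W, .nil v, rfl, ?_⟩
  rwa [Walk.append_nil]

/-- A balanced cycle list gives a circuit walk. -/
lemma isCircuitWalk_balanced (l : List (E × Bool)) (v : V) (h : Γ.IsWL l v v)
    (hne : l ≠ []) (hs : (l.map Γ.stepSrc).Nodup) (he : (l.map Prod.fst).Nodup)
    (hsgn : Γ.sgnL l = 1) : Γ.IsCircuitWalk (Γ.toWalk l v v h) := by
  refine isCircuitWalk_of_self _ (Or.inl ⟨isCycle_toWalk l v h hne hs he, ?_⟩)
  rw [sgn_toWalk]; exact hsgn

/-- An unbalanced cycle list gives an unbalanced cycle walk. -/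
lemma isUnbalancedCycle_toWalk (l : List (E × Bool)) (v : V) (h : Γ.IsWL l v v)
    (hne : l ≠ []) (hs : (l.map Γ.stepSrc).Nodup) (he : (l.map Prod.fst).Nodup)
    (hsgn : Γ.sgnL l = -1) : Γ.IsUnbalancedCycle (Γ.toWalk l v v h) :=
  ⟨isCycle_toWalk l v h hne hs he, by rw [sgn_toWalk]; exact hsgn⟩

/-- A tight handcuff pair of lists gives a circuit walk. -/
lemma isCircuitWalk_tight (l₁ l₂ : List (E × Bool)) (x : V)
    (h₁ : Γ.IsWL l₁ x x) (h₂ : Γ.IsWL l₂ x x)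
    (hne₁ : l₁ ≠ []) (hs₁ : (l₁.map Γ.stepSrc).Nodup) (he₁ : (l₁.map Prod.fst).Nodup)
    (hsgn₁ : Γ.sgnL l₁ = -1)
    (hne₂ : l₂ ≠ []) (hs₂ : (l₂.map Γ.stepSrc).Nodup) (he₂ : (l₂.map Prod.fst).Nodup)
    (hsgn₂ : Γ.sgnL l₂ = -1)
    (hshare : ∀ y ∈ l₁.map Γ.stepSrc, y ∈ l₂.map Γ.stepSrc → y = x)
    (hedis : ∀ g ∈ l₁.map Prod.fst, g ∉ l₂.map Prod.fst) :
    Γ.IsCircuitWalk (Γ.toWalk (l₁ ++ l₂) x x (h₁.append h₂)) := by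
  refine isCircuitWalk_of_self _ (Or.inr (Or.inl
    ⟨Γ.toWalk l₁ x x h₁, Γ.toWalk l₂ x x h₂, ⟨?_, ?_, ?_, ?_⟩, ?_⟩))
  · exact isUnbalancedCycle_toWalk l₁ x h₁ hne₁ hs₁ he₁ hsgn₁
  · exact isUnbalancedCycle_toWalk l₂ x h₂ hne₂ hs₂ he₂ hsgn₂
  · intro y hy hy'
    rw [Walk.srcs_eq, steps_toWalk] at hy hy'
    exact hshare y hy hy'
  · intro g hg
    rw [Walk.edges_eq, steps_toWalk] at hg ⊢
    exact hedis g hg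
  · exact toWalk_append l₁ l₂ x x x h₁ h₂ _

/-- A loose handcuff triple of lists gives a circuit walk. -/
lemma isCircuitWalk_loose (l₁ p l₂ : List (E × Bool)) (x y : V)
    (h₁ : Γ.IsWL l₁ x x) (hp : Γ.IsWL p x y) (h₂ : Γ.IsWL l₂ y y)
    (hne₁ : l₁ ≠ []) (hs₁ : (l₁.map Γ.stepSrc).Nodup) (he₁ : (l₁.map Prod.fst).Nodup)
    (hsgn₁ : Γ.sgnL l₁ = -1)
    (hne₂ : l₂ ≠ []) (hs₂ : (l₂.map Γ.stepSrc).Nodup) (he₂ : (l₂.map Prod.fst).Nodup)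
    (hsgn₂ : Γ.sgnL l₂ = -1)
    (hpne : p ≠ []) (hpv : (p.map Γ.stepSrc ++ [y]).Nodup)
    (hdisj : ∀ z ∈ l₁.map Γ.stepSrc, z ∉ l₂.map Γ.stepSrc)
    (hp₁ : ∀ z ∈ p.map Γ.stepSrc ++ [y], z ∈ l₁.map Γ.stepSrc → z = x)
    (hp₂ : ∀ z ∈ p.map Γ.stepSrc ++ [y], z ∈ l₂.map Γ.stepSrc → z = y)
    (hpe : ∀ g ∈ p.map Prod.fst, g ∉ l₁.map Prod.fst ∧ g ∉ l₂.map Prod.fst) :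
    Γ.IsCircuitWalk (Γ.toWalk (l₁ ++ (p ++ (l₂ ++ revL p))) x x
      (h₁.append (hp.append (h₂.append hp.revL)))) := by
  refine isCircuitWalk_of_self _ (Or.inr (Or.inr
    ⟨y, Γ.toWalk l₁ x x h₁, Γ.toWalk p x y hp, Γ.toWalk l₂ y y h₂,
      Γ.toWalk (revL p) y x hp.revL, ⟨?_, ?_, ?_, ?_, ?_, ?_, ?_⟩, ?_, ?_⟩))
  · exact isUnbalancedCycle_toWalk l₁ x h₁ hne₁ hs₁ he₁ hsgn₁
  · exact isUnbalancedCycle_toWalk l₂ y h₂ hne₂ hs₂ he₂ hsgn₂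
  · constructor
    · rw [Walk.edges_eq, steps_toWalk]
      simpa using hpne
    · rw [Walk.verts_eq, steps_toWalk]
      exact hpv
  · intro z hz
    rw [Walk.srcs_eq, steps_toWalk] at hz ⊢
    exact hdisj z hz
  · intro z hz hz'
    rw [Walk.verts_eq, steps_toWalk] at hz
    rw [Walk.srcs_eq, steps_toWalk] at hz'
    exact hp₁ z hz hz'
  · intro z hz hz'
    rw [Walk.verts_eq, steps_toWalk] at hz
    rw [Walk.srcs_eq, steps_toWalk] at hz'
    exact hp₂ z hz hz'
  · intro g hg
    rw [Walk.edges_eq, steps_toWalk] at hg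
    constructor
    · rw [Walk.edges_eq, steps_toWalk]
      exact (hpe g hg).1
    · rw [Walk.edges_eq, steps_toWalk]
      exact (hpe g hg).2
  · show (Γ.toWalk (revL p) y x hp.revL).steps =
      (Γ.toWalk p x y hp).steps.reverse.map fun s => (s.1, !s.2)
    rw [steps_toWalk, steps_toWalk]
    rfl
  · refine (toWalk_append l₁ (p ++ (l₂ ++ revL p)) x x x h₁
      (hp.append (h₂.append hp.revL)) _).trans ?_
    refine congrArg (fun q => (Γ.toWalk l₁ x x h₁).append q) ?_
    refine (toWalk_append p (l₂ ++ revL p) x y x hp (h₂.append hp.revL) _).trans ?_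
    exact congrArg (fun q => (Γ.toWalk p x y hp).append q)
      (toWalk_append l₂ (revL p) y y x h₂ hp.revL _)

/-- Circuit walks are positive closed walks. -/
lemma IsCircuitWalk.sgnL_steps {v : V} {W : Γ.Walk v v} (h : Γ.IsCircuitWalk W) :
    Γ.sgnL W.steps = 1 := by
  obtain ⟨u, A, B, rfl, hbasic⟩ := h
  have hBA : Γ.sgnL (B.append A).steps = Γ.sgnL (A.append B).steps := by
    rw [Walk.steps_append, Walk.steps_append, sgnL_append, sgnL_append, mul_comm]
  rw [hBA]
  rcases hbasic with hbal | ⟨C₁, C₂, hhc, heq⟩ | ⟨w, C₁, P, C₂, Q, hhc, hrev, heq⟩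
  · rw [← Walk.sgn_eq_sgnL]
    exact hbal.2
  · rw [heq, Walk.steps_append, sgnL_append, ← Walk.sgn_eq_sgnL, ← Walk.sgn_eq_sgnL,
      hhc.1.2, hhc.2.1.2]
    simp
  · have hQ : Γ.sgnL Q.steps = Γ.sgnL P.steps := by
      rw [hrev]
      exact sgnL_revL
    have h1 : Γ.sgnL C₁.steps = -1 := by rw [← Walk.sgn_eq_sgnL]; exact hhc.1.2
    have h2 : Γ.sgnL C₂.steps = -1 := by rw [← Walk.sgn_eq_sgnL]; exact hhc.2.1.2
    rw [heq]
    rw [Walk.steps_append, Walk.steps_append, Walk.steps_append, sgnL_append, sgnL_append,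
      sgnL_append, hQ, h1, h2]
    rcases Int.units_eq_one_or (Γ.sgnL P.steps) with h | h <;> simp [h]


/-! ### Components, roots, and the parent forest -/

lemma adj_step (s : E × Bool) : Γ.Adj (Γ.stepSrc s) (Γ.stepTgt s) := by
  rcases s with ⟨e, d⟩
  cases d
  · exact ⟨e, Or.inr rfl⟩
  · exact ⟨e, Or.inl rfl⟩

lemma comp_step (s : E × Bool) : Γ.comp (Γ.stepSrc s) = Γ.comp (Γ.stepTgt s) :=
  Quot.sound (adj_step s)

lemma comp_eq_of_isWL : ∀ {l : List (E × Bool)} {u v : V}, Γ.IsWL l u v →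
    Γ.comp u = Γ.comp v := by
  intro l
  induction l with
  | nil => intro u v h; rw [h]
  | cons s l ih =>
    intro u v h
    rw [h.1, comp_step s]
    exact ih h.2

lemma exists_isWL_of_comp_eq {u v : V} (h : Γ.comp u = Γ.comp v) :
    ∃ l, Γ.IsWL l u v := by
  have h' : Relation.EqvGen Γ.Adj u v := Quot.eq.mp h
  clear h
  induction h' with
  | rel a b hab =>
    obtain ⟨e, he | he⟩ := hab
    · refine ⟨[(e, true)], ?_, ?_⟩
      · show a = (Γ.ends e).1
        rw [he]
      · show Γ.endpt e false = b
        show (Γ.ends e).2 = b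
        rw [he]
    · refine ⟨[(e, false)], ?_, ?_⟩
      · show a = (Γ.ends e).2
        rw [he]
      · show Γ.endpt e true = b
        show (Γ.ends e).1 = b
        rw [he]
  | refl a => exact ⟨[], rfl⟩
  | symm a b _ ih =>
    obtain ⟨l, hl⟩ := ih
    exact ⟨revL l, hl.revL⟩
  | trans a b c _ _ ih₁ ih₂ =>
    obtain ⟨l₁, h₁⟩ := ih₁
    obtain ⟨l₂, h₂⟩ := ih₂
    exact ⟨l₁ ++ l₂, h₁.append h₂⟩

/-- A chosen representative of each component. -/
noncomputable def crep (Γ : SGraph V E) (c : Γ.Components) : V := (Quot.exists_rep c).choose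

lemma comp_crep (c : Γ.Components) : Γ.comp (Γ.crep c) = c := (Quot.exists_rep c).choose_spec

/-- The root of the component of a vertex. -/
noncomputable def rt (Γ : SGraph V E) (v : V) : V := Γ.crep (Γ.comp v)

lemma comp_rt (v : V) : Γ.comp (Γ.rt v) = Γ.comp v := comp_crep _

lemma rt_eq_of_comp {u v : V} (h : Γ.comp u = Γ.comp v) : Γ.rt u = Γ.rt v := by
  unfold SGraph.rt
  rw [h]

lemma rt_rt (v : V) : Γ.rt (Γ.rt v) = Γ.rt v := rt_eq_of_comp (comp_rt v)

lemma rt_crep (c : Γ.Components) : Γ.rt (Γ.crep c) = Γ.crep c := by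
  unfold SGraph.rt
  rw [comp_crep]

lemma exists_walk_rt (v : V) : ∃ n : ℕ, ∃ l, Γ.IsWL l v (Γ.rt v) ∧ l.length = n := by
  obtain ⟨l, hl⟩ := exists_isWL_of_comp_eq (comp_rt v).symm
  exact ⟨l.length, l, hl, rfl⟩

/-- Distance to the root. -/
noncomputable def dV (Γ : SGraph V E) (v : V) : ℕ := Nat.find (exists_walk_rt (Γ := Γ) v)

lemma dV_eq_zero_iff {v : V} : Γ.dV v = 0 ↔ v = Γ.rt v := by
  unfold SGraph.dV
  rw [Nat.find_eq_zero]
  constructor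
  · rintro ⟨l, hl, hlen⟩
    rw [List.length_eq_zero_iff] at hlen
    subst hlen
    exact hl
  · intro h
    exact ⟨[], h, rfl⟩

lemma exists_pstep (v : V) (h : v ≠ Γ.rt v) :
    ∃ s : E × Bool, Γ.stepSrc s = v ∧ Γ.dV (Γ.stepTgt s) + 1 = Γ.dV v := by
  obtain ⟨l, hl, hlen⟩ := Nat.find_spec (exists_walk_rt (Γ := Γ) v)
  match l, hl, hlen with
  | [], hl, hlen => exact absurd hl h
  | s :: l', hl, hlen =>
    refine ⟨s, hl.1.symm, ?_⟩
    have hrt : Γ.rt (Γ.stepTgt s) = Γ.rt v := by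
      refine rt_eq_of_comp ?_
      rw [← comp_step s, hl.1]
    have hle : Γ.dV (Γ.stepTgt s) ≤ l'.length := by
      show Nat.find _ ≤ _
      refine Nat.find_le ⟨l', ?_, rfl⟩
      rw [hrt]
      exact hl.2
    have hge : Γ.dV v ≤ Γ.dV (Γ.stepTgt s) + 1 := by
      obtain ⟨m, hm, hmlen⟩ := Nat.find_spec (exists_walk_rt (Γ := Γ) (Γ.stepTgt s))
      show Nat.find _ ≤ _
      refine Nat.find_le ⟨s :: m, ⟨hl.1, ?_⟩, by simp [hmlen]; rfl⟩
      rw [← hrt]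
      exact hm
    simp only [List.length_cons] at hlen
    have hlen' : Γ.dV v = l'.length + 1 := hlen.symm
    omega

/-- The parent step of a non-root vertex. -/
noncomputable def pstep (Γ : SGraph V E) (v : V) (h : v ≠ Γ.rt v) : E × Bool :=
  (exists_pstep v h).choose

lemma pstep_src (v : V) (h : v ≠ Γ.rt v) : Γ.stepSrc (Γ.pstep v h) = v :=
  (exists_pstep v h).choose_spec.1

lemma pstep_dV (v : V) (h : v ≠ Γ.rt v) : Γ.dV (Γ.stepTgt (Γ.pstep v h)) + 1 = Γ.dV v :=
  (exists_pstep v h).choose_spec.2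

/-- The parent of a vertex. -/
noncomputable def par (Γ : SGraph V E) (v : V) : V :=
  if h : v = Γ.rt v then v else Γ.stepTgt (Γ.pstep v h)

lemma par_eq (v : V) (h : v ≠ Γ.rt v) : Γ.par v = Γ.stepTgt (Γ.pstep v h) := dif_neg h

lemma dV_par (v : V) (h : v ≠ Γ.rt v) : Γ.dV (Γ.par v) + 1 = Γ.dV v := by
  rw [par_eq v h]
  exact pstep_dV v h

lemma dV_par_lt (v : V) (h : v ≠ Γ.rt v) : Γ.dV (Γ.par v) < Γ.dV v := by
  have := dV_par v h
  omega

lemma comp_par (v : V) : Γ.comp (Γ.par v) = Γ.comp v := by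
  by_cases h : v = Γ.rt v
  · rw [SGraph.par, dif_pos h]
  · rw [par_eq v h, ← comp_step, pstep_src v h]

lemma rt_par (v : V) : Γ.rt (Γ.par v) = Γ.rt v := rt_eq_of_comp (comp_par v)

/-- The canonical walk from a vertex to its root (list of steps). -/
noncomputable def plist (Γ : SGraph V E) (v : V) : List (E × Bool) :=
  if h : v = Γ.rt v then [] else Γ.pstep v h :: plist Γ (Γ.par v)
termination_by Γ.dV v
decreasing_by exact dV_par_lt v h

/-- The vertices along the canonical walk to the root. -/
noncomputable def pverts (Γ : SGraph V E) (v : V) : List V :=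
  if h : v = Γ.rt v then [v] else v :: pverts Γ (Γ.par v)
termination_by Γ.dV v
decreasing_by exact dV_par_lt v h

lemma plist_rt (v : V) (h : v = Γ.rt v) : Γ.plist v = [] := by
  rw [SGraph.plist, dif_pos h]

lemma plist_cons (v : V) (h : v ≠ Γ.rt v) :
    Γ.plist v = Γ.pstep v h :: Γ.plist (Γ.par v) := by
  rw [SGraph.plist]
  rw [dif_neg h]

lemma pverts_rt (v : V) (h : v = Γ.rt v) : Γ.pverts v = [v] := by
  rw [SGraph.pverts, dif_pos h]

lemma pverts_cons (v : V) (h : v ≠ Γ.rt v) : Γ.pverts v = v :: Γ.pverts (Γ.par v) := by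
  rw [SGraph.pverts]
  rw [dif_neg h]

/-- Strong induction on the distance to the root. -/
lemma dV_induction (P : V → Prop)
    (H : ∀ v, (v ≠ Γ.rt v → P (Γ.par v)) → P v) : ∀ v, P v := by
  have key : ∀ n (v : V), Γ.dV v ≤ n → P v := by
    intro n
    induction n with
    | zero =>
      intro v hv
      refine H v fun hne => absurd (dV_eq_zero_iff.mp (Nat.le_zero.mp hv)) hne
    | succ n ih =>
      intro v hv
      refine H v fun hne => ih _ ?_
      have := dV_par v hne
      omega
  exact fun v => key (Γ.dV v) v le_rfl

lemma plist_isWL (v : V) : Γ.IsWL (Γ.plist v) v (Γ.rt v) := by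
  induction v using dV_induction with
  | H v ih =>
    by_cases h : v = Γ.rt v
    · rw [plist_rt v h]
      exact h
    · rw [plist_cons v h]
      refine ⟨(pstep_src v h).symm, ?_⟩
      have := ih h
      rw [← par_eq v h, ← rt_par v] at *
      exact this

lemma mem_pverts_self (v : V) : v ∈ Γ.pverts v := by
  by_cases h : v = Γ.rt v
  · rw [pverts_rt v h]; simp
  · rw [pverts_cons v h]; simp

lemma rt_mem_pverts (v : V) : Γ.rt v ∈ Γ.pverts v := by
  induction v using dV_induction with
  | H v ih =>
    by_cases h : v = Γ.rt v
    · rw [pverts_rt v h]; simp [← h]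
    · rw [pverts_cons v h]
      have := ih h
      rw [rt_par v] at this
      simp [this]

lemma mem_pverts_dV {x v : V} (h : x ∈ Γ.pverts v) : x = v ∨ Γ.dV x < Γ.dV v := by
  induction v using dV_induction with
  | H v ih =>
    by_cases hv : v = Γ.rt v
    · rw [pverts_rt v hv] at h
      simp at h
      exact Or.inl h
    · rw [pverts_cons v hv] at h
      rcases List.mem_cons.mp h with h' | h'
      · exact Or.inl h'
      · right
        rcases ih hv h' with h'' | h''
        · rw [h'']; exact dV_par_lt v hv
        · exact h''.trans (dV_par_lt v hv)

lemma not_mem_pverts_par (v : V) (h : v ≠ Γ.rt v) : v ∉ Γ.pverts (Γ.par v) := by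
  intro hmem
  have h1 := dV_par v h
  rcases mem_pverts_dV hmem with h' | h'
  · rw [← h'] at h1
    omega
  · omega

lemma pverts_nodup (v : V) : (Γ.pverts v).Nodup := by
  induction v using dV_induction with
  | H v ih =>
    by_cases h : v = Γ.rt v
    · rw [pverts_rt v h]; simp
    · rw [pverts_cons v h]
      exact List.nodup_cons.mpr ⟨not_mem_pverts_par v h, ih h⟩

lemma mem_pverts_of_mem_par {x v : V} (h : v ≠ Γ.rt v) (hx : x ∈ Γ.pverts (Γ.par v)) :
    x ∈ Γ.pverts v := by
  rw [pverts_cons v h]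
  simp [hx]

lemma pverts_trans {x y v : V} (hxy : x ∈ Γ.pverts y) (hyv : y ∈ Γ.pverts v) :
    x ∈ Γ.pverts v := by
  induction v using dV_induction with
  | H v ih =>
    by_cases h : v = Γ.rt v
    · rw [pverts_rt v h] at hyv
      simp at hyv
      subst hyv
      exact hxy
    · rw [pverts_cons v h] at hyv
      rcases List.mem_cons.mp hyv with h' | h'
      · subst h'; exact hxy
      · exact mem_pverts_of_mem_par h (ih h h')

lemma pverts_antisymm {x y : V} (hxy : x ∈ Γ.pverts y) (hyx : y ∈ Γ.pverts x) : x = y := by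
  rcases mem_pverts_dV hxy with h | h
  · exact h
  · rcases mem_pverts_dV hyx with h' | h'
    · exact h'.symm
    · omega

lemma comp_of_mem_pverts {x v : V} (h : x ∈ Γ.pverts v) : Γ.comp x = Γ.comp v := by
  induction v using dV_induction with
  | H v ih =>
    by_cases hv : v = Γ.rt v
    · rw [pverts_rt v hv] at h
      simp at h
      rw [h]
    · rw [pverts_cons v hv] at h
      rcases List.mem_cons.mp h with h' | h'
      · rw [h']
      · rw [ih hv h', comp_par]

lemma rt_of_mem_pverts {x v : V} (h : x ∈ Γ.pverts v) : Γ.rt x = Γ.rt v :=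
  rt_eq_of_comp (comp_of_mem_pverts h)


lemma ne_rt_of_mem_ne {m v : V} (hm : m ∈ Γ.pverts v) (hne : m ≠ v) : v ≠ Γ.rt v := by
  intro h
  rw [pverts_rt v h] at hm
  simp at hm
  exact hne hm

lemma mem_pverts_par_of_ne {m v : V} (hm : m ∈ Γ.pverts v) (hne : m ≠ v) :
    m ∈ Γ.pverts (Γ.par v) := by
  rw [pverts_cons v (ne_rt_of_mem_ne hm hne)] at hm
  rcases List.mem_cons.mp hm with h | h
  · exact absurd h hne
  · exact h

/-- Injectivity of the parent edge assignment. -/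
lemma pstep_fst_inj {v w : V} (hv : v ≠ Γ.rt v) (hw : w ≠ Γ.rt w)
    (h : (Γ.pstep v hv).1 = (Γ.pstep w hw).1) : v = w := by
  set s := Γ.pstep v hv with hs
  set t := Γ.pstep w hw with ht
  by_cases hd : s.2 = t.2
  · have : Γ.stepSrc s = Γ.stepSrc t := by
      unfold SGraph.stepSrc
      rw [h, hd]
    rw [pstep_src v hv, pstep_src w hw] at this
    exact this
  · exfalso
    have hd' : s.2 = !t.2 := by
      cases hb : s.2 <;> cases hb' : t.2 <;> simp_all
    have h1 : v = Γ.stepTgt t := by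
      rw [← pstep_src v hv]
      unfold SGraph.stepSrc SGraph.stepTgt
      rw [← hs, hd', h]
    have h2 : w = Γ.stepTgt s := by
      rw [← pstep_src w hw]
      unfold SGraph.stepSrc SGraph.stepTgt
      rw [← ht, ← h]
      congr 1
      cases hb : s.2 <;> cases hb' : t.2 <;> simp_all
    have e1 := pstep_dV v hv
    have e2 := pstep_dV w hw
    rw [← h2] at e1
    rw [← h1] at e2
    omega

/-- The set of parent (spanning forest) edges. -/
def B0 (Γ : SGraph V E) : Set E := {g | ∃ (v : V) (h : v ≠ Γ.rt v), (Γ.pstep v h).1 = g}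

/-- The branch of the canonical walk from `v` down to an ancestor `m`. -/
noncomputable def branchTo (Γ : SGraph V E) (v m : V) : List (E × Bool) :=
  if v = m then [] else if h : v = Γ.rt v then [] else
    Γ.pstep v h :: branchTo Γ (Γ.par v) m
termination_by Γ.dV v
decreasing_by exact dV_par_lt v h

lemma branchTo_self (v : V) : Γ.branchTo v v = [] := by
  rw [SGraph.branchTo, if_pos rfl]

lemma branchTo_cons {v m : V} (hm : m ∈ Γ.pverts v) (hne : m ≠ v) :
    Γ.branchTo v m = Γ.pstep v (ne_rt_of_mem_ne hm hne) :: Γ.branchTo (Γ.par v) m := by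
  rw [SGraph.branchTo, if_neg (Ne.symm hne), dif_neg (ne_rt_of_mem_ne hm hne)]

lemma branchTo_isWL {v m : V} (hm : m ∈ Γ.pverts v) : Γ.IsWL (Γ.branchTo v m) v m := by
  induction v using dV_induction with
  | H v ih =>
    by_cases hne : m = v
    · subst hne
      rw [branchTo_self]
      rfl
    · rw [branchTo_cons hm hne]
      refine ⟨(pstep_src v _).symm, ?_⟩
      rw [← par_eq v (ne_rt_of_mem_ne hm hne)]
      exact ih (ne_rt_of_mem_ne hm hne) (mem_pverts_par_of_ne hm hne)

lemma mem_srcs_branchTo_iff {v m x : V} (hm : m ∈ Γ.pverts v) :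
    x ∈ (Γ.branchTo v m).map Γ.stepSrc ↔ x ∈ Γ.pverts v ∧ m ∈ Γ.pverts x ∧ x ≠ m := by
  induction v using dV_induction with
  | H v ih =>
    by_cases hne : m = v
    · subst hne
      rw [branchTo_self]
      simp only [List.map_nil, List.not_mem_nil, false_iff]
      rintro ⟨h1, h2, h3⟩
      exact h3 (pverts_antisymm h1 h2)
    · rw [branchTo_cons hm hne]
      have hrt := ne_rt_of_mem_ne hm hne
      have hm' := mem_pverts_par_of_ne hm hne
      simp only [List.map_cons, List.mem_cons, pstep_src v hrt]
      rw [ih hrt hm']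
      constructor
      · rintro (rfl | ⟨h1, h2, h3⟩)
        · exact ⟨mem_pverts_self _, hm, Ne.symm hne⟩
        · exact ⟨mem_pverts_of_mem_par hrt h1, h2, h3⟩
      · rintro ⟨h1, h2, h3⟩
        by_cases hxv : x = v
        · exact Or.inl hxv
        · right
          rw [pverts_cons v hrt] at h1
          rcases List.mem_cons.mp h1 with h' | h'
          · exact absurd h' hxv
          · exact ⟨h', h2, h3⟩

lemma srcs_branchTo_subset {v m : V} (hm : m ∈ Γ.pverts v) :
    ∀ x ∈ (Γ.branchTo v m).map Γ.stepSrc, x ∈ Γ.pverts v := fun x hx =>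
  ((mem_srcs_branchTo_iff hm).mp hx).1

lemma srcs_branchTo_nodup {v m : V} (hm : m ∈ Γ.pverts v) :
    ((Γ.branchTo v m).map Γ.stepSrc).Nodup := by
  induction v using dV_induction with
  | H v ih =>
    by_cases hne : m = v
    · subst hne
      rw [branchTo_self]
      simp
    · rw [branchTo_cons hm hne]
      have hrt := ne_rt_of_mem_ne hm hne
      have hm' := mem_pverts_par_of_ne hm hne
      simp only [List.map_cons, List.nodup_cons, pstep_src v hrt]
      refine ⟨fun hmem => ?_, ih hrt hm'⟩
      exact not_mem_pverts_par v hrt (srcs_branchTo_subset hm' v hmem)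

lemma mem_edges_branchTo {v m : V} (hm : m ∈ Γ.pverts v) {g : E}
    (hg : g ∈ (Γ.branchTo v m).map Prod.fst) :
    ∃ (x : V) (hx : x ≠ Γ.rt x), x ∈ (Γ.branchTo v m).map Γ.stepSrc ∧
      (Γ.pstep x hx).1 = g := by
  induction v using dV_induction with
  | H v ih =>
    by_cases hne : m = v
    · subst hne
      rw [branchTo_self] at hg
      simp at hg
    · have hrt := ne_rt_of_mem_ne hm hne
      have hm' := mem_pverts_par_of_ne hm hne
      rw [branchTo_cons hm hne] at hg ⊢
      simp only [List.map_cons, List.mem_cons] at hg ⊢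
      rcases hg with hg | hg
      · exact ⟨v, hrt, Or.inl (pstep_src v hrt).symm, hg.symm⟩
      · obtain ⟨x, hx, hmem, hpx⟩ := ih hrt hm' hg
        exact ⟨x, hx, Or.inr hmem, hpx⟩

lemma edges_branchTo_b0 {v m : V} (hm : m ∈ Γ.pverts v) {g : E}
    (hg : g ∈ (Γ.branchTo v m).map Prod.fst) : g ∈ Γ.B0 := by
  obtain ⟨x, hx, _, hpx⟩ := mem_edges_branchTo hm hg
  exact ⟨x, hx, hpx⟩

lemma edges_branchTo_nodup {v m : V} (hm : m ∈ Γ.pverts v) :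
    ((Γ.branchTo v m).map Prod.fst).Nodup := by
  induction v using dV_induction with
  | H v ih =>
    by_cases hne : m = v
    · subst hne
      rw [branchTo_self]
      simp
    · have hrt := ne_rt_of_mem_ne hm hne
      have hm' := mem_pverts_par_of_ne hm hne
      rw [branchTo_cons hm hne]
      simp only [List.map_cons, List.nodup_cons]
      refine ⟨fun hmem => ?_, ih hrt hm'⟩
      obtain ⟨x, hx, hxmem, hpx⟩ := mem_edges_branchTo hm' hmem
      have hxv : x = v := pstep_fst_inj hx hrt hpx
      subst hxv
      exact not_mem_pverts_par x hrt (srcs_branchTo_subset hm' x hxmem)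

lemma edges_branchTo_disj {v m v' m' : V} (hm : m ∈ Γ.pverts v) (hm' : m' ∈ Γ.pverts v')
    (hdisj : ∀ x ∈ (Γ.branchTo v m).map Γ.stepSrc, x ∉ (Γ.branchTo v' m').map Γ.stepSrc) :
    ∀ g ∈ (Γ.branchTo v m).map Prod.fst, g ∉ (Γ.branchTo v' m').map Prod.fst := by
  intro g hg hg'
  obtain ⟨x, hx, hxmem, hpx⟩ := mem_edges_branchTo hm hg
  obtain ⟨y, hy, hymem, hpy⟩ := mem_edges_branchTo hm' hg'
  have : x = y := pstep_fst_inj hx hy (by rw [hpx, hpy])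
  subst this
  exact hdisj x hxmem hymem

lemma plist_decomp {v m : V} (hm : m ∈ Γ.pverts v) :
    Γ.plist v = Γ.branchTo v m ++ Γ.plist m := by
  induction v using dV_induction with
  | H v ih =>
    by_cases hne : m = v
    · subst hne
      rw [branchTo_self]
      rfl
    · have hrt := ne_rt_of_mem_ne hm hne
      have hm' := mem_pverts_par_of_ne hm hne
      rw [branchTo_cons hm hne, plist_cons v hrt, ih hrt hm']
      rfl

/-- The deepest common ancestor of `u` and `v`. -/
noncomputable def meetV (Γ : SGraph V E) (u v : V) : V :=
  if u ∈ Γ.pverts v then u else if u = Γ.rt u then u else meetV Γ (Γ.par u) v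
termination_by Γ.dV u
decreasing_by exact dV_par_lt u (by assumption)

lemma meetV_spec' {v : V} : ∀ {u : V}, Γ.rt u = Γ.rt v →
    Γ.meetV u v ∈ Γ.pverts u ∧ Γ.meetV u v ∈ Γ.pverts v ∧
      ∀ x ∈ (Γ.branchTo u (Γ.meetV u v)).map Γ.stepSrc, x ∉ Γ.pverts v := by
  intro u
  induction u using dV_induction with
  | H u ih =>
    intro hr
    by_cases hin : u ∈ Γ.pverts v
    · rw [SGraph.meetV, if_pos hin]
      refine ⟨mem_pverts_self u, hin, ?_⟩
      rw [branchTo_self]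
      simp
    · have hrt : u ≠ Γ.rt u := by
        intro h
        apply hin
        rw [h, hr]
        exact rt_mem_pverts v
      rw [SGraph.meetV, if_neg hin, if_neg hrt]
      have hr' : Γ.rt (Γ.par u) = Γ.rt v := by rw [rt_par u, hr]
      obtain ⟨h1, h2, h3⟩ := ih hrt hr'
      have hmem : Γ.meetV (Γ.par u) v ∈ Γ.pverts u := mem_pverts_of_mem_par hrt h1
      have hne : Γ.meetV (Γ.par u) v ≠ u := by
        intro h
        rw [h] at h2
        exact hin h2
      refine ⟨hmem, h2, ?_⟩
      rw [branchTo_cons hmem hne]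
      simp only [List.map_cons, List.mem_cons]
      rintro x (hx | hx)
      · rw [pstep_src u hrt] at hx
        subst hx
        exact hin
      · exact h3 x hx

lemma meetV_spec {u v : V} (hr : Γ.rt u = Γ.rt v) :
    Γ.meetV u v ∈ Γ.pverts u ∧ Γ.meetV u v ∈ Γ.pverts v ∧
      ∀ x ∈ (Γ.branchTo u (Γ.meetV u v)).map Γ.stepSrc, x ∉ Γ.pverts v :=
  meetV_spec' hr

/-- The tree path between two vertices of the same component. -/
noncomputable def tpathL (Γ : SGraph V E) (u v : V) : List (E × Bool) :=
  Γ.branchTo u (Γ.meetV u v) ++ revL (Γ.branchTo v (Γ.meetV u v))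

lemma tpathL_isWL {u v : V} (hr : Γ.rt u = Γ.rt v) : Γ.IsWL (Γ.tpathL u v) u v := by
  obtain ⟨h1, h2, _⟩ := meetV_spec hr
  exact (branchTo_isWL h1).append (branchTo_isWL h2).revL

lemma isWL_srcs_shift {l : List (E × Bool)} {u v : V} (h : Γ.IsWL l u v) :
    l.map Γ.stepSrc ++ [v] = u :: l.map Γ.stepTgt := by
  induction l generalizing u with
  | nil => rw [h]; rfl
  | cons s l ih =>
    simp only [List.map_cons, List.cons_append, h.1]
    rw [ih h.2]

lemma map_src_revL {l : List (E × Bool)} :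
    (revL l).map Γ.stepSrc = (l.map Γ.stepTgt).reverse := by
  unfold SGraph.revL
  rw [List.map_map, List.map_reverse]
  rfl

/-- The vertex list of the tree path. -/
lemma tpathL_verts {u v : V} (hr : Γ.rt u = Γ.rt v) :
    (Γ.tpathL u v).map Γ.stepSrc ++ [v] =
      (Γ.branchTo u (Γ.meetV u v)).map Γ.stepSrc ++
        ((Γ.branchTo v (Γ.meetV u v)).map Γ.stepSrc ++ [Γ.meetV u v]).reverse := by
  obtain ⟨h1, h2, _⟩ := meetV_spec hr
  unfold SGraph.tpathL
  rw [List.map_append, List.append_assoc, map_src_revL, isWL_srcs_shift (branchTo_isWL h2)]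
  simp

lemma tpathL_verts_nodup {u v : V} (hr : Γ.rt u = Γ.rt v) :
    ((Γ.tpathL u v).map Γ.stepSrc ++ [v]).Nodup := by
  obtain ⟨h1, h2, h3⟩ := meetV_spec hr
  rw [tpathL_verts hr]
  rw [List.nodup_append']
  refine ⟨srcs_branchTo_nodup h1, ?_, ?_⟩
  · rw [List.nodup_reverse]
    rw [List.nodup_append']
    refine ⟨srcs_branchTo_nodup h2, by simp, ?_⟩
    intro x hx
    simp only [List.mem_singleton]
    intro hxm
    subst hxm
    exact ((mem_srcs_branchTo_iff h2).mp hx).2.2 rfl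
  · intro x hx
    rw [List.mem_reverse]
    intro hmem
    refine h3 x hx ?_
    rcases List.mem_append.mp hmem with h' | h'
    · exact ((mem_srcs_branchTo_iff h2).mp h').1
    · simp at h'
      subst h'
      exact h2

lemma tpathL_edges_b0 {u v : V} (hr : Γ.rt u = Γ.rt v) :
    ∀ g ∈ (Γ.tpathL u v).map Prod.fst, g ∈ Γ.B0 := by
  obtain ⟨h1, h2, _⟩ := meetV_spec hr
  intro g hg
  unfold SGraph.tpathL at hg
  rw [List.map_append] at hg
  rcases List.mem_append.mp hg with h' | h'
  · exact edges_branchTo_b0 h1 h'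
  · rw [edges_revL, List.mem_reverse] at h'
    exact edges_branchTo_b0 h2 h'

lemma tpathL_edges_nodup {u v : V} (hr : Γ.rt u = Γ.rt v) :
    ((Γ.tpathL u v).map Prod.fst).Nodup := by
  obtain ⟨h1, h2, h3⟩ := meetV_spec hr
  unfold SGraph.tpathL
  rw [List.map_append, List.nodup_append']
  refine ⟨edges_branchTo_nodup h1, ?_, ?_⟩
  · rw [edges_revL, List.nodup_reverse]
    exact edges_branchTo_nodup h2
  intro g hg
  rw [edges_revL, List.mem_reverse]
  refine edges_branchTo_disj h1 h2 ?_ g hg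
  intro x hx hx'
  exact h3 x hx (srcs_branchTo_subset h2 x hx')


lemma units_eq_neg_of_ne {u w : ℤˣ} (h : u ≠ w) : u = -w := by
  rcases Int.units_eq_one_or u with h1 | h1 <;>
    rcases Int.units_eq_one_or w with h2 | h2 <;> simp_all

/-- The switching sign of a vertex. -/
noncomputable def tau (Γ : SGraph V E) (v : V) : ℤˣ := Γ.sgnL (Γ.plist v)

lemma tau_rt (v : V) (h : v = Γ.rt v) : Γ.tau v = 1 := by
  unfold SGraph.tau
  rw [plist_rt v h]
  rfl

lemma tau_par (v : V) (h : v ≠ Γ.rt v) :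
    Γ.tau v = Γ.sign (Γ.pstep v h).1 * Γ.tau (Γ.par v) := by
  unfold SGraph.tau
  rw [plist_cons v h, sgnL_cons]

/-- An edge is matched if its sign agrees with the switching signs of its endpoints. -/
def Matched (Γ : SGraph V E) (g : E) : Prop :=
  Γ.sign g = Γ.tau (Γ.ends g).1 * Γ.tau (Γ.ends g).2

lemma matched_step {s : E × Bool} (h : Γ.Matched s.1) :
    Γ.sign s.1 = Γ.tau (Γ.stepSrc s) * Γ.tau (Γ.stepTgt s) := by
  rcases s with ⟨e, d⟩
  cases d
  · exact h.trans (mul_comm _ _)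
  · exact h

lemma pstep_matched (v : V) (h : v ≠ Γ.rt v) : Γ.Matched (Γ.pstep v h).1 := by
  have key : Γ.sign (Γ.pstep v h).1 = Γ.tau v * Γ.tau (Γ.par v) := by
    rw [tau_par v h, mul_assoc, units_sq, mul_one]
  have hsrc : Γ.tau (Γ.stepSrc (Γ.pstep v h)) = Γ.tau v := by rw [pstep_src v h]
  have htgt : Γ.tau (Γ.stepTgt (Γ.pstep v h)) = Γ.tau (Γ.par v) := by rw [← par_eq v h]
  set s := Γ.pstep v h with hs
  unfold SGraph.Matched
  unfold SGraph.stepSrc at hsrc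
  unfold SGraph.stepTgt at htgt
  cases hd : s.2
  · rw [hd] at hsrc htgt
    simp only [SGraph.endpt, Bool.not_false, cond_false, cond_true] at hsrc htgt
    rw [key, ← hsrc, ← htgt, mul_comm]
  · rw [hd] at hsrc htgt
    simp only [SGraph.endpt, Bool.not_true, cond_false, cond_true] at hsrc htgt
    rw [key, ← hsrc, ← htgt]

lemma b0_matched {g : E} (hg : g ∈ Γ.B0) : Γ.Matched g := by
  obtain ⟨v, h, rfl⟩ := hg
  exact pstep_matched v h

lemma sgnL_matched {l : List (E × Bool)} {u v : V} (h : Γ.IsWL l u v)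
    (hm : ∀ g ∈ l.map Prod.fst, Γ.Matched g) : Γ.sgnL l = Γ.tau u * Γ.tau v := by
  induction l generalizing u with
  | nil => rw [h, sgnL_nil, units_sq]
  | cons s l ih =>
    rw [sgnL_cons, ih h.2 fun g hg => hm g (by simp [hg]),
      matched_step (hm s.1 (by simp)), h.1, mul_assoc, ← mul_assoc (Γ.tau (Γ.stepTgt s)),
      units_sq, one_mul]

lemma comp_srcs_of_isWL {l : List (E × Bool)} {u v x : V} (h : Γ.IsWL l u v)
    (hx : x ∈ l.map Γ.stepSrc) : Γ.comp x = Γ.comp u := by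
  induction l generalizing u with
  | nil => simp at hx
  | cons s l ih =>
    rw [List.map_cons] at hx
    rcases List.mem_cons.mp hx with h' | h'
    · rw [h', h.1]
    · rw [ih h.2 h', ← comp_step s, h.1]

lemma comp_edge (g : E) : Γ.comp (Γ.ends g).1 = Γ.comp (Γ.ends g).2 := comp_step (g, true)

lemma isBalancedComponent_of_matched (c : Γ.Components)
    (h : ∀ e : E, Γ.comp (Γ.ends e).1 = c → Γ.Matched e) : Γ.IsBalancedComponent c := by
  intro v hv W _
  rw [Walk.sgn_eq_sgnL]
  rw [sgnL_matched W.steps_isWL, units_sq]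
  intro g hg
  obtain ⟨s, hs, rfl⟩ := List.exists_of_mem_map hg
  refine h s.1 ?_
  have hsrc : Γ.comp (Γ.stepSrc s) = Γ.comp v :=
    comp_srcs_of_isWL W.steps_isWL (List.mem_map_of_mem hs)
  have : Γ.comp (Γ.stepSrc s) = Γ.comp (Γ.ends s.1).1 := by
    rcases s with ⟨e, d⟩
    cases d
    · exact (comp_edge e).symm
    · rfl
  rw [← this, hsrc, hv]

lemma exists_mismatch {c : Γ.Components} (hc : ¬ Γ.IsBalancedComponent c) :
    ∃ e : E, Γ.comp (Γ.ends e).1 = c ∧ ¬ Γ.Matched e := by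
  by_contra h
  push_neg at h
  exact hc (isBalancedComponent_of_matched c h)

/-- A chosen mismatched edge in an unbalanced component. -/
noncomputable def mismatchE (Γ : SGraph V E) (c : Γ.Components)
    (hc : ¬ Γ.IsBalancedComponent c) : E := (exists_mismatch hc).choose

lemma mismatchE_comp (c : Γ.Components) (hc : ¬ Γ.IsBalancedComponent c) :
    Γ.comp (Γ.ends (Γ.mismatchE c hc)).1 = c := (exists_mismatch hc).choose_spec.1

lemma mismatchE_not_matched (c : Γ.Components) (hc : ¬ Γ.IsBalancedComponent c) :
    ¬ Γ.Matched (Γ.mismatchE c hc) := (exists_mismatch hc).choose_spec.2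

lemma not_matched_not_b0 {g : E} (h : ¬ Γ.Matched g) : g ∉ Γ.B0 :=
  fun hg => h (b0_matched hg)

/-- The fundamental cycle of an edge: the edge followed by the tree path back. -/
noncomputable def cycL (Γ : SGraph V E) (e : E) : List (E × Bool) :=
  (e, true) :: Γ.tpathL (Γ.ends e).2 (Γ.ends e).1

lemma rt_ends (e : E) : Γ.rt (Γ.ends e).2 = Γ.rt (Γ.ends e).1 :=
  rt_eq_of_comp (comp_edge e).symm

lemma cycL_isWL (e : E) : Γ.IsWL (Γ.cycL e) (Γ.ends e).1 (Γ.ends e).1 :=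
  ⟨rfl, tpathL_isWL (rt_ends e)⟩

lemma cycL_srcs (e : E) :
    (Γ.cycL e).map Γ.stepSrc =
      (Γ.ends e).1 :: (Γ.tpathL (Γ.ends e).2 (Γ.ends e).1).map Γ.stepSrc := rfl

lemma cycL_edges (e : E) :
    (Γ.cycL e).map Prod.fst = e :: (Γ.tpathL (Γ.ends e).2 (Γ.ends e).1).map Prod.fst := rfl

lemma cycL_ne_nil (e : E) : Γ.cycL e ≠ [] := by
  unfold SGraph.cycL
  simp

lemma cycL_srcs_nodup (e : E) : ((Γ.cycL e).map Γ.stepSrc).Nodup := by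
  rw [cycL_srcs]
  have h : ((Γ.tpathL (Γ.ends e).2 (Γ.ends e).1).map Γ.stepSrc ++ [(Γ.ends e).1]).Nodup :=
    tpathL_verts_nodup (rt_ends e)
  rw [List.nodup_append'] at h
  refine List.nodup_cons.mpr ⟨fun hmem => ?_, h.1⟩
  exact h.2.2 hmem (by simp)

lemma cycL_edges_nodup (e : E) (he : e ∉ Γ.B0) : ((Γ.cycL e).map Prod.fst).Nodup := by
  rw [cycL_edges]
  refine List.nodup_cons.mpr ⟨fun hmem => ?_, tpathL_edges_nodup (rt_ends e)⟩
  exact he (tpathL_edges_b0 (rt_ends e) e hmem)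

lemma cycL_sgn (e : E) :
    Γ.sgnL (Γ.cycL e) = Γ.sign e * (Γ.tau (Γ.ends e).2 * Γ.tau (Γ.ends e).1) := by
  unfold SGraph.cycL
  rw [sgnL_cons]
  congr 1
  exact sgnL_matched (tpathL_isWL (rt_ends e))
    fun g hg => b0_matched (tpathL_edges_b0 (rt_ends e) g hg)

lemma cycL_sgn_matched (e : E) (h : Γ.Matched e) : Γ.sgnL (Γ.cycL e) = 1 := by
  rw [cycL_sgn, h]
  rcases Int.units_eq_one_or (Γ.tau (Γ.ends e).1) with h1 | h1 <;>
    rcases Int.units_eq_one_or (Γ.tau (Γ.ends e).2) with h2 | h2 <;> rw [h1, h2] <;> simp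

lemma cycL_sgn_mismatched (e : E) (h : ¬ Γ.Matched e) : Γ.sgnL (Γ.cycL e) = -1 := by
  have h' : Γ.sign e = -(Γ.tau (Γ.ends e).1 * Γ.tau (Γ.ends e).2) := units_eq_neg_of_ne h
  rw [cycL_sgn, h']
  rcases Int.units_eq_one_or (Γ.tau (Γ.ends e).1) with h1 | h1 <;>
    rcases Int.units_eq_one_or (Γ.tau (Γ.ends e).2) with h2 | h2 <;> rw [h1, h2] <;> simp

lemma cycL_edges_sub (e : E) {g : E} (hg : g ∈ (Γ.cycL e).map Prod.fst) :
    g = e ∨ g ∈ Γ.B0 := by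
  rw [cycL_edges] at hg
  rcases List.mem_cons.mp hg with h | h
  · exact Or.inl h
  · exact Or.inr (tpathL_edges_b0 (rt_ends e) g h)

lemma mem_srcs_of_closed {l : List (E × Bool)} {v x : V} (h : Γ.IsWL l v v) (hne : l ≠ [])
    (hx : x ∈ l.map Γ.stepSrc ++ [v]) : x ∈ l.map Γ.stepSrc := by
  rcases List.mem_append.mp hx with h' | h'
  · exact h'
  · match l, h, hne with
    | s :: l', h, _ =>
      simp only [List.mem_singleton] at h'
      subst h'
      rw [h.1]
      simp

/-- The unbalanced fundamental cycle of a mismatched edge is an unbalanced cycle,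
hence its component is unbalanced. -/
lemma not_balanced_of_mismatch {e : E} (h : ¬ Γ.Matched e) :
    ¬ Γ.IsBalancedComponent (Γ.comp (Γ.ends e).1) := by
  intro hbal
  have hW := hbal (Γ.ends e).1 rfl (Γ.toWalk _ _ _ (cycL_isWL e))
    (isCycle_toWalk _ _ _ (cycL_ne_nil e) (cycL_srcs_nodup e)
      (cycL_edges_nodup e (not_matched_not_b0 h)))
  rw [sgn_toWalk, cycL_sgn_mismatched e h] at hW
  simp at hW


/-! ### Helpers for the fundamental-circuit argument -/

lemma tsumL_single_count {G : Type} [AddCommGroup G] (ω : E → Bool → ℤˣ) (f : E → G)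
    (e : E) : ∀ l : List (E × Bool), (l.map Prod.fst).count e = 1 →
    (∀ g ∈ l.map Prod.fst, g ≠ e → f g = 0) →
    ∃ u : ℤˣ, Γ.tsumL ω f l = (u : ℤ) • f e := by
  intro l
  induction l with
  | nil => simp
  | cons s l ih =>
    intro hcount hf
    rw [List.map_cons] at hcount
    by_cases hc : s.1 = e
    · have hrest : (l.map Prod.fst).count e = 0 := by
        rw [hc, List.count_cons_self] at hcount
        omega
      have hzero : Γ.tsumL ω f l = 0 := by
        refine tsumL_zero _ _ _ fun g hg => hf g (by simp [hg]) ?_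
        rintro rfl
        rw [List.count_eq_zero] at hrest
        exact hrest hg
      refine ⟨ω s.1 s.2, ?_⟩
      rw [tsumL_cons, hzero, hc]
      simp
    · have h0 : f s.1 = 0 := hf s.1 (by simp) hc
      have hcount' : (l.map Prod.fst).count e = 1 := by
        rw [List.count_cons_of_ne hc] at hcount
        exact hcount
      obtain ⟨u, hu⟩ := ih hcount' fun g hg => hf g (by simp [hg])
      refine ⟨Γ.sign s.1 * u, ?_⟩
      rw [tsumL_cons, h0, hu]
      push_cast
      rw [mul_smul]
      simp

lemma units_smul_eq_zero {G : Type} [AddCommGroup G] {u : ℤˣ} {x : G}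
    (h : (u : ℤ) • x = 0) : x = 0 := by
  have := congrArg (fun y => (u : ℤ) • y) h
  simpa [units_smul_smul] using this

/-- Targets of steps lie among later sources or the endpoint. -/
lemma mem_tgt_sub {l : List (E × Bool)} {u v z : V} (h : Γ.IsWL l u v)
    (hz : z ∈ l.map Γ.stepTgt) : z ∈ l.map Γ.stepSrc ++ [v] := by
  have := isWL_srcs_shift h
  rw [this]
  simp [hz]

lemma stepTgt_mem_verts {l : List (E × Bool)} {u v : V} (h : Γ.IsWL l u v) {s : E × Bool}
    (hs : s ∈ l) : Γ.stepTgt s ∈ l.map Γ.stepSrc ++ [v] :=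
  mem_tgt_sub h (List.mem_map_of_mem hs)

/-- Both endpoints of an edge used by a walk are vertices of the walk. -/
lemma endpts_mem_verts {l : List (E × Bool)} {u v : V} (h : Γ.IsWL l u v) {g : E}
    (hg : g ∈ l.map Prod.fst) :
    Γ.endpt g true ∈ l.map Γ.stepSrc ++ [v] ∧ Γ.endpt g false ∈ l.map Γ.stepSrc ++ [v] := by
  obtain ⟨s, hs, rfl⟩ := List.exists_of_mem_map hg
  have hsrc : Γ.stepSrc s ∈ l.map Γ.stepSrc ++ [v] := by
    simp [List.mem_map_of_mem (f := Γ.stepSrc) hs]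
  have htgt := stepTgt_mem_verts h hs
  rcases s with ⟨g, d⟩
  cases d
  · exact ⟨htgt, hsrc⟩
  · exact ⟨hsrc, htgt⟩

lemma b0_not_loop {g : E} (hg : g ∈ Γ.B0) : Γ.endpt g true ≠ Γ.endpt g false := by
  obtain ⟨v, h, rfl⟩ := hg
  have h1 := pstep_src v h
  have h2 := pstep_dV v h
  set s := Γ.pstep v h with hs
  intro heq
  have : Γ.stepSrc s = Γ.stepTgt s := by
    unfold SGraph.stepSrc SGraph.stepTgt
    cases hd : s.2
    · rw [Bool.not_false]; exact heq.symm
    · rw [Bool.not_true]; exact heq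
  rw [this] at h1
  rw [h1] at h2
  omega

/-- If a simple path and another walk share an edge, they share both its endpoints. -/
lemma shared_edge_endpts {l l' : List (E × Bool)} {u v u' v' : V}
    (h : Γ.IsWL l u v) (h' : Γ.IsWL l' u' v') {g : E}
    (hg : g ∈ l.map Prod.fst) (hg' : g ∈ l'.map Prod.fst) (hb : g ∈ Γ.B0)
    (hint : ∀ z, z ∈ l.map Γ.stepSrc ++ [v] → z ∈ l'.map Γ.stepSrc ++ [v'] → False) :
    False := by
  obtain ⟨ht, hf⟩ := endpts_mem_verts h hg
  obtain ⟨ht', hf'⟩ := endpts_mem_verts h' hg'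
  exact hint _ ht ht'

/-- Rotation of a closed walk list at a source vertex. -/
lemma exists_rotation {l : List (E × Bool)} {v x : V} (h : Γ.IsWL l v v)
    (hx : x ∈ l.map Γ.stepSrc) :
    ∃ r, Γ.IsWL r x x ∧ r.Perm l := by
  obtain ⟨l₁, l₂, rfl, h1, h2, _⟩ := exists_split_at_src l v v h hx
  exact ⟨l₂ ++ l₁, h2.append h1, List.perm_append_comm⟩


lemma units_solve {u x : ℤˣ} (h : u * x = -1) : u = -x := by
  rcases Int.units_eq_one_or u with h1 | h1 <;>
    rcases Int.units_eq_one_or x with h2 | h2 <;> simp_all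

lemma endpts_mem_srcs_closed {l : List (E × Bool)} {v : V} (h : Γ.IsWL l v v)
    (hne : l ≠ []) {g : E} (hg : g ∈ l.map Prod.fst) :
    Γ.endpt g true ∈ l.map Γ.stepSrc ∧ Γ.endpt g false ∈ l.map Γ.stepSrc := by
  obtain ⟨h1, h2⟩ := endpts_mem_verts h hg
  exact ⟨mem_srcs_of_closed h hne h1, mem_srcs_of_closed h hne h2⟩

/-- A closed middle portion of a simple walk is trivial. -/
lemma closed_mid_nil {A B C : List (E × Bool)} {u w v : V} (hA : Γ.IsWL A u w)
    (hB : Γ.IsWL B w w) (hC : Γ.IsWL C w v)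
    (hnodup : ((A ++ B ++ C).map Γ.stepSrc ++ [v]).Nodup) : B = [] := by
  by_contra hne
  have hwB : w ∈ B.map Γ.stepSrc := by
    match B, hB, hne with
    | s :: B', hB, _ => rw [hB.1]; simp
  have hwC : w ∈ C.map Γ.stepSrc ++ [v] := by
    match C, hC with
    | [], hC => simp only [List.map_nil, List.nil_append, List.mem_singleton]; exact hC
    | s :: C', hC => rw [hC.1]; simp
  rw [List.map_append, List.map_append, List.append_assoc, List.append_assoc,
    List.nodup_append'] at hnodup
  have := hnodup.2.1
  rw [List.nodup_append'] at this
  exact this.2.2 hwB hwC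

/-- Rotation of a fundamental cycle to a chosen base vertex. -/
lemma rot_cyc (e : E) (heB : e ∉ Γ.B0) (hem : ¬ Γ.Matched e) {x : V}
    (hx : x ∈ (Γ.cycL e).map Γ.stepSrc) :
    ∃ r, Γ.IsWL r x x ∧ r ≠ [] ∧ (r.map Γ.stepSrc).Nodup ∧ (r.map Prod.fst).Nodup ∧
      Γ.sgnL r = -1 ∧ (∀ z, z ∈ r.map Γ.stepSrc ↔ z ∈ (Γ.cycL e).map Γ.stepSrc) ∧
      (∀ g, g ∈ r.map Prod.fst ↔ g ∈ (Γ.cycL e).map Prod.fst) ∧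
      (r.map Prod.fst).count e = 1 := by
  obtain ⟨r, hr, hperm⟩ := exists_rotation (cycL_isWL e) hx
  have hpermS := hperm.map Γ.stepSrc
  have hpermE := hperm.map (Prod.fst (α := E) (β := Bool))
  refine ⟨r, hr, ?_, ?_, ?_, ?_, fun z => hpermS.mem_iff, fun g => hpermE.mem_iff, ?_⟩
  · intro h
    subst h
    exact cycL_ne_nil e hperm.symm.eq_nil
  · exact hpermS.nodup_iff.mpr (cycL_srcs_nodup e)
  · exact hpermE.nodup_iff.mpr (cycL_edges_nodup e heB)
  · rw [sgnL_perm hperm]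
    exact cycL_sgn_mismatched e hem
  · rw [hpermE.count_eq]
    rw [cycL_edges, List.count_cons_self]
    have : ((Γ.tpathL (Γ.ends e).2 (Γ.ends e).1).map Prod.fst).count e = 0 :=
      List.count_eq_zero.mpr fun hmem => heB (tpathL_edges_b0 (rt_ends e) e hmem)
    omega

lemma tension_tsumL {G : Type} [AddCommGroup G] {ω : E → Bool → ℤˣ} {f : E → G}
    (hf : Γ.IsTension ω f) {l : List (E × Bool)} {v : V} (h : Γ.IsWL l v v)
    (hc : Γ.IsCircuitWalk (Γ.toWalk l v v h)) : Γ.tsumL ω f l = 0 := by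
  have := hf v _ hc
  rwa [Walk.tensionSum_eq_tsumL, steps_toWalk] at this

/-- Case (i) of the hard core: matched non-forest edges. -/
lemma f_zero_matched {G : Type} [AddCommGroup G] {ω : E → Bool → ℤˣ} {f : E → G}
    (hf : Γ.IsTension ω f) (hB0 : ∀ g ∈ Γ.B0, f g = 0) {e : E} (heB : e ∉ Γ.B0)
    (hm : Γ.Matched e) : f e = 0 := by
  have h0 := tension_tsumL hf (cycL_isWL e) (isCircuitWalk_balanced _ _ _
    (cycL_ne_nil e) (cycL_srcs_nodup e) (cycL_edges_nodup e heB) (cycL_sgn_matched e hm))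
  have hcount : ((Γ.cycL e).map Prod.fst).count e = 1 := by
    rw [cycL_edges, List.count_cons_self]
    have : ((Γ.tpathL (Γ.ends e).2 (Γ.ends e).1).map Prod.fst).count e = 0 :=
      List.count_eq_zero.mpr fun hmem => heB (tpathL_edges_b0 (rt_ends e) e hmem)
    omega
  obtain ⟨u, hu⟩ := tsumL_single_count ω f e (Γ.cycL e) hcount fun g hg hne => by
    rcases cycL_edges_sub e hg with h | h
    · exact absurd h hne
    · exact hB0 g h
  rw [h0] at hu
  exact units_smul_eq_zero hu.symm


lemma head_src_mem {l : List (E × Bool)} {u v : V} (h : Γ.IsWL l u v) (hne : l ≠ []) :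
    u ∈ l.map Γ.stepSrc := by
  match l, h, hne with
  | s :: l', h, _ => rw [h.1]; simp

/-- The hard core: a tension vanishing on the basis vanishes entirely. -/
lemma hardcore {G : Type} [AddCommGroup G] {ω : E → Bool → ℤˣ} {f : E → G}
    (hf : Γ.IsTension ω f) (hB0 : ∀ g ∈ Γ.B0, f g = 0)
    (hec : ∀ (c : Γ.Components) (hc : ¬ Γ.IsBalancedComponent c),
      f (Γ.mismatchE c hc) = 0) :
    ∀ e : E, f e = 0 := by
  intro e
  by_cases heB : e ∈ Γ.B0
  · exact hB0 e heB
  by_cases hem : Γ.Matched e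
  · exact f_zero_matched hf hB0 heB hem
  have hc : ¬ Γ.IsBalancedComponent (Γ.comp (Γ.ends e).1) := not_balanced_of_mismatch hem
  set e' := Γ.mismatchE (Γ.comp (Γ.ends e).1) hc with he'def
  have hfe' : f e' = 0 := hec _ hc
  have he'm : ¬ Γ.Matched e' := mismatchE_not_matched _ hc
  have he'B : e' ∉ Γ.B0 := not_matched_not_b0 he'm
  by_cases hee' : e = e'
  · rw [hee']; exact hfe'
  have hZ : ∀ g, g ∈ Γ.B0 ∨ g = e' → f g = 0 := by
    rintro g (hg | rfl)
    · exact hB0 g hg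
    · exact hfe'
  set S₁ := (Γ.cycL e).map Γ.stepSrc with hS₁def
  set S₂ := (Γ.cycL e').map Γ.stepSrc with hS₂def
  have hsub₁ : ∀ g ∈ (Γ.cycL e).map Prod.fst, g = e ∨ g ∈ Γ.B0 :=
    fun g hg => cycL_edges_sub e hg
  have hsub₂ : ∀ g ∈ (Γ.cycL e').map Prod.fst, g = e' ∨ g ∈ Γ.B0 :=
    fun g hg => cycL_edges_sub e' hg
  have hA_e2 : e ∉ (Γ.cycL e').map Prod.fst := by
    intro h
    rcases hsub₂ e h with h | h
    exacts [hee' h, heB h]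
  have hA_e'1 : e' ∉ (Γ.cycL e).map Prod.fst := by
    intro h
    rcases hsub₁ e' h with h | h
    exacts [hee' h.symm, he'B h]
  by_cases hdisj : ∀ z ∈ S₁, z ∉ S₂
  -- Case A : disjoint cycles, loose handcuff
  · have ha₁ : (Γ.ends e).1 ∈ S₁ := by rw [hS₁def, cycL_srcs]; simp
    have ha'₂ : (Γ.ends e').1 ∈ S₂ := by rw [hS₂def, cycL_srcs]; simp
    -- connecting tree path
    have hrta : Γ.rt (Γ.ends e).1 = Γ.rt (Γ.ends e').1 := by
      refine rt_eq_of_comp ?_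
      rw [mismatchE_comp _ hc]
    set L := Γ.tpathL (Γ.ends e).1 (Γ.ends e').1 with hLdef
    have hL : Γ.IsWL L (Γ.ends e).1 (Γ.ends e').1 := tpathL_isWL hrta
    have hLv : (L.map Γ.stepSrc ++ [(Γ.ends e').1]).Nodup := tpathL_verts_nodup hrta
    have hLB0 : ∀ g ∈ L.map Prod.fst, g ∈ Γ.B0 := tpathL_edges_b0 hrta
    obtain ⟨L₁, L₂, x₂, hLsplit, hWL₁, hWL₂, hx₂S₂, hclean₁⟩ :=
      exists_firstHit (fun z => z ∈ S₂) L (Γ.ends e).1 (Γ.ends e').1 hL (Or.inl ha'₂)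
    obtain ⟨M₁, M₂, x₁, hMsplit, hM₁, hM₂, hx₁S₁, hcleanM⟩ :=
      exists_firstHit (fun z => z ∈ S₁) (revL L₁) x₂ (Γ.ends e).1 hWL₁.revL (Or.inl ha₁)
    have hx₁x₂ : x₁ ≠ x₂ := fun h => hdisj x₁ hx₁S₁ (h ▸ hx₂S₂)
    -- the trimmed connecting path
    set P := revL M₁ with hPdef
    have hP : Γ.IsWL P x₁ x₂ := by
      rw [hPdef, ← revL_revL (l := M₁)]
      exact (hM₁.revL).revL.revL
    have hPne : P ≠ [] := by
      intro h
      rw [h] at hP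
      exact hx₁x₂ hP
    -- membership facts
    have hsrcsL₁sub : ∀ z ∈ L₁.map Γ.stepSrc, z ∈ L.map Γ.stepSrc := by
      intro z hz
      rw [hLsplit, List.map_append]
      exact List.mem_append_left _ hz
    have hx₂nL₁ : x₂ ∉ L₁.map Γ.stepSrc := fun h => hclean₁ x₂ h hx₂S₂
    have hvertsL₁ : (L₁.map Γ.stepSrc ++ [x₂]).Nodup := by
      rw [List.nodup_append']
      refine ⟨?_, by simp, ?_⟩
      · have : (L.map Γ.stepSrc).Nodup := (List.nodup_append'.mp hLv).1
        rw [hLsplit, List.map_append, List.nodup_append'] at this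
        exact this.1
      · intro z hz
        simp only [List.mem_singleton]
        rintro rfl
        exact hx₂nL₁ hz
    have hmemM₁ : ∀ z ∈ M₁.map Γ.stepSrc, z ∈ L₁.map Γ.stepSrc ++ [x₂] := by
      intro z hz
      have h1 : z ∈ (revL L₁).map Γ.stepSrc := by
        rw [hMsplit, List.map_append]
        exact List.mem_append_left _ hz
      rw [map_src_revL, List.mem_reverse] at h1
      exact mem_tgt_sub hWL₁ h1
    have hx₁nM₁ : x₁ ∉ M₁.map Γ.stepSrc := fun h => hcleanM x₁ h hx₁S₁
    have hvertsM₁ : (M₁.map Γ.stepSrc ++ [x₁]).Nodup := by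
      rw [List.nodup_append']
      refine ⟨?_, by simp, ?_⟩
      · have h2 : ((L₁.map Γ.stepSrc ++ [x₂]).tail).Nodup := hvertsL₁.tail
        rw [isWL_srcs_shift hWL₁] at hvertsL₁
        have h3 : (L₁.map Γ.stepTgt).Nodup := (List.nodup_cons.mp hvertsL₁).2
        have h4 : ((revL L₁).map Γ.stepSrc).Nodup := by
          rw [map_src_revL, List.nodup_reverse]
          exact h3
        rw [hMsplit, List.map_append, List.nodup_append'] at h4
        exact h4.1
      · intro z hz
        simp only [List.mem_singleton]
        rintro rfl
        exact hx₁nM₁ hz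
    have hsrcsPsub : ∀ z ∈ P.map Γ.stepSrc, z ∈ M₁.map Γ.stepSrc ++ [x₁] := by
      intro z hz
      rw [hPdef, map_src_revL, List.mem_reverse] at hz
      exact mem_tgt_sub hM₁ hz
    have hPvS₁ : ∀ z ∈ P.map Γ.stepSrc ++ [x₂], z ∈ S₁ → z = x₁ := by
      intro z hz hzS₁
      rcases List.mem_append.mp hz with hz | hz
      · rcases List.mem_append.mp (hsrcsPsub z hz) with h | h
        · exact absurd hzS₁ (hcleanM z h)
        · simpa using h
      · simp only [List.mem_singleton] at hz
        subst hz
        exact absurd hx₂S₂ (hdisj z hzS₁)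
    have hPvS₂ : ∀ z ∈ P.map Γ.stepSrc ++ [x₂], z ∈ S₂ → z = x₂ := by
      intro z hz hzS₂
      rcases List.mem_append.mp hz with hz | hz
      · rcases List.mem_append.mp (hsrcsPsub z hz) with h | h
        · rcases List.mem_append.mp (hmemM₁ z h) with h' | h'
          · exact absurd hzS₂ (hclean₁ z h')
          · simpa using h'
        · simp only [List.mem_singleton] at h
          subst h
          exact absurd hzS₂ (hdisj z hx₁S₁)
      · simpa using hz
    have hPv : (P.map Γ.stepSrc ++ [x₂]).Nodup := by
      have h1 : (M₁.map Γ.stepTgt).Nodup := by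
        rw [isWL_srcs_shift hM₁] at hvertsM₁
        exact (List.nodup_cons.mp hvertsM₁).2
      have h2 : (P.map Γ.stepSrc).Nodup := by
        rw [hPdef, map_src_revL, List.nodup_reverse]
        exact h1
      rw [List.nodup_append']
      refine ⟨h2, by simp, ?_⟩
      intro z hz
      simp only [List.mem_singleton]
      rintro rfl
      rw [hPdef, map_src_revL, List.mem_reverse] at hz
      rw [isWL_srcs_shift hM₁] at hvertsM₁
      exact (List.nodup_cons.mp hvertsM₁).1 hz
    have hPB0 : ∀ g ∈ P.map Prod.fst, g ∈ Γ.B0 := by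
      intro g hg
      rw [hPdef, edges_revL, List.mem_reverse] at hg
      have : g ∈ (revL L₁).map Prod.fst := by
        rw [hMsplit, List.map_append]
        exact List.mem_append_left _ hg
      rw [edges_revL, List.mem_reverse] at this
      refine hLB0 g ?_
      rw [hLsplit, List.map_append]
      exact List.mem_append_left _ this
    -- rotations of the two cycles
    obtain ⟨r₁, hr₁, hne₁, hs₁, hE₁, hsgn₁, hmemS₁, hmemE₁, hcount₁⟩ :=
      rot_cyc e heB hem hx₁S₁
    obtain ⟨r₂, hr₂, hne₂, hs₂, hE₂, hsgn₂, hmemS₂, hmemE₂, hcount₂⟩ :=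
      rot_cyc e' he'B he'm hx₂S₂
    have hedgePdisj : ∀ g ∈ P.map Prod.fst, g ∉ r₁.map Prod.fst ∧ g ∉ r₂.map Prod.fst := by
      intro g hg
      constructor
      · intro hg'
        rw [hmemE₁] at hg'
        obtain ⟨ht, hfa⟩ := endpts_mem_srcs_closed (cycL_isWL e) (cycL_ne_nil e) hg'
        obtain ⟨ht', hf'⟩ := endpts_mem_verts hP hg
        have e1 : Γ.endpt g true = x₁ := hPvS₁ _ ht' ht
        have e2 : Γ.endpt g false = x₁ := hPvS₁ _ hf' hfa
        exact b0_not_loop (hPB0 g hg) (e1.trans e2.symm)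
      · intro hg'
        rw [hmemE₂] at hg'
        obtain ⟨ht, hfa⟩ := endpts_mem_srcs_closed (cycL_isWL e') (cycL_ne_nil e') hg'
        obtain ⟨ht', hf'⟩ := endpts_mem_verts hP hg
        have e1 : Γ.endpt g true = x₂ := hPvS₂ _ ht' ht
        have e2 : Γ.endpt g false = x₂ := hPvS₂ _ hf' hfa
        exact b0_not_loop (hPB0 g hg) (e1.trans e2.symm)
    have hcirc := isCircuitWalk_loose r₁ P r₂ x₁ x₂ hr₁ hP hr₂ hne₁ hs₁ hE₁ hsgn₁
      hne₂ hs₂ hE₂ hsgn₂ hPne hPv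
      (fun z hz hz' => hdisj z ((hmemS₁ z).mp hz) ((hmemS₂ z).mp hz'))
      (fun z hz hz' => hPvS₁ z hz ((hmemS₁ z).mp hz'))
      (fun z hz hz' => hPvS₂ z hz ((hmemS₂ z).mp hz'))
      hedgePdisj
    have h0 := tension_tsumL hf _ hcirc
    have hcnt : (((r₁ ++ (P ++ (r₂ ++ revL P))).map Prod.fst).count e) = 1 := by
      have hcP : (P.map Prod.fst).count e = 0 :=
        List.count_eq_zero.mpr fun h => heB (hPB0 e h)
      have hcRP : ((revL P).map Prod.fst).count e = 0 := by
        rw [edges_revL, List.count_reverse]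
        exact hcP
      have hcr₂ : (r₂.map Prod.fst).count e = 0 :=
        List.count_eq_zero.mpr fun h => hA_e2 ((hmemE₂ e).mp h)
      simp only [List.map_append, List.count_append]
      omega
    have hzero : ∀ g ∈ (r₁ ++ (P ++ (r₂ ++ revL P))).map Prod.fst, g ≠ e → f g = 0 := by
      intro g hg hgne
      simp only [List.map_append, List.mem_append] at hg
      refine hZ g ?_
      rcases hg with hg | hg | hg | hg
      · rcases hsub₁ g ((hmemE₁ g).mp hg) with h | h
        exacts [absurd h hgne, Or.inl h]
      · exact Or.inl (hPB0 g hg)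
      · rcases hsub₂ g ((hmemE₂ g).mp hg) with h | h
        exacts [Or.inr h, Or.inl h]
      · rw [edges_revL, List.mem_reverse] at hg
        exact Or.inl (hPB0 g hg)
    obtain ⟨u, hu⟩ := tsumL_single_count ω f e _ hcnt hzero
    rw [h0] at hu
    exact units_smul_eq_zero hu.symm
  -- shared vertex cases
  · push_neg at hdisj
    obtain ⟨x, hx₁, hx₂⟩ := hdisj
    by_cases huniq : ∀ z ∈ S₁, z ∈ S₂ → z = x
    -- Case B1 : tight handcuff
    · obtain ⟨r₁, hr₁, hne₁, hs₁, hE₁, hsgn₁, hmemS₁, hmemE₁, hcount₁⟩ :=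
        rot_cyc e heB hem hx₁
      obtain ⟨r₂, hr₂, hne₂, hs₂, hE₂, hsgn₂, hmemS₂, hmemE₂, hcount₂⟩ :=
        rot_cyc e' he'B he'm hx₂
      have hedis : ∀ g ∈ r₁.map Prod.fst, g ∉ r₂.map Prod.fst := by
        intro g hg hg'
        rw [hmemE₁] at hg
        rw [hmemE₂] at hg'
        have hgB : g ∈ Γ.B0 := by
          rcases hsub₁ g hg with h | h
          · subst h; exact absurd hg' hA_e2
          · exact h
        obtain ⟨ht1, hf1⟩ := endpts_mem_srcs_closed (cycL_isWL e) (cycL_ne_nil e) hg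
        obtain ⟨ht2, hf2⟩ := endpts_mem_srcs_closed (cycL_isWL e') (cycL_ne_nil e') hg'
        have hxt : Γ.endpt g true = x := huniq _ ht1 ht2
        have hxf : Γ.endpt g false = x := huniq _ hf1 hf2
        exact b0_not_loop hgB (hxt.trans hxf.symm)
      have hcirc := isCircuitWalk_tight r₁ r₂ x hr₁ hr₂ hne₁ hs₁ hE₁ hsgn₁
        hne₂ hs₂ hE₂ hsgn₂
        (fun z hz hz' => huniq z ((hmemS₁ z).mp hz) ((hmemS₂ z).mp hz')) hedis
      have h0 := tension_tsumL hf _ hcirc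
      have hcnt : (((r₁ ++ r₂).map Prod.fst).count e) = 1 := by
        have hcr₂ : (r₂.map Prod.fst).count e = 0 :=
          List.count_eq_zero.mpr fun h => hA_e2 ((hmemE₂ e).mp h)
        simp only [List.map_append, List.count_append]
        omega
      have hzero : ∀ g ∈ (r₁ ++ r₂).map Prod.fst, g ≠ e → f g = 0 := by
        intro g hg hgne
        simp only [List.map_append, List.mem_append] at hg
        refine hZ g ?_
        rcases hg with hg | hg
        · rcases hsub₁ g ((hmemE₁ g).mp hg) with h | h
          exacts [absurd h hgne, Or.inl h]
        · rcases hsub₂ g ((hmemE₂ g).mp hg) with h | h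
          exacts [Or.inr h, Or.inl h]
      obtain ⟨u, hu⟩ := tsumL_single_count ω f e _ hcnt hzero
      rw [h0] at hu
      exact units_smul_eq_zero hu.symm
    -- Case B2 : two shared vertices, balanced two-chord cycle
    · push_neg at huniq
      obtain ⟨y, hy₁, hy₂, hyx⟩ := huniq
      have hrL : Γ.rt (Γ.ends e).2 = Γ.rt (Γ.ends e).1 := rt_ends e
      set L := Γ.tpathL (Γ.ends e).2 (Γ.ends e).1 with hLdef
      have hL : Γ.IsWL L (Γ.ends e).2 (Γ.ends e).1 := tpathL_isWL hrL
      have hLv : (L.map Γ.stepSrc ++ [(Γ.ends e).1]).Nodup := tpathL_verts_nodup hrL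
      have hLB0 : ∀ g ∈ L.map Prod.fst, g ∈ Γ.B0 := tpathL_edges_b0 hrL
      have hLE : (L.map Prod.fst).Nodup := tpathL_edges_nodup hrL
      have hS₁L : ∀ z, z ∈ S₁ ↔ z ∈ L.map Γ.stepSrc ++ [(Γ.ends e).1] := by
        intro z
        rw [hS₁def, cycL_srcs]
        simp only [List.mem_cons, List.mem_append, List.mem_singleton]
        tauto
      have hhit1 : ((Γ.ends e).1 ∈ S₂) ∨ ∃ z ∈ L.map Γ.stepSrc, z ∈ S₂ := by
        rcases List.mem_append.mp ((hS₁L x).mp hx₁) with h | h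
        · exact Or.inr ⟨x, h, hx₂⟩
        · simp only [List.mem_singleton] at h
          subst h
          exact Or.inl hx₂
      obtain ⟨L₁, L₂, p, hLsplit, hWL₁, hWL₂, hpS₂, hclean₁⟩ :=
        exists_firstHit (fun z => z ∈ S₂) L (Γ.ends e).2 (Γ.ends e).1 hL hhit1
      obtain ⟨M₁, M₂, q, hMsplit, hM₁, hM₂, hqS₂, hcleanM⟩ :=
        exists_firstHit (fun z => z ∈ S₂) (revL L₂) (Γ.ends e).1 p hWL₂.revL (Or.inl hpS₂)
      have hL₂eq : L₂ = revL M₂ ++ revL M₁ := by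
        rw [← revL_append, ← hMsplit, revL_revL]
      have hR₂ : Γ.IsWL (revL M₁) q (Γ.ends e).1 := hM₁.revL
      have hMid : Γ.IsWL (revL M₂) p q := hM₂.revL
      have hsrcsLnd : (L.map Γ.stepSrc).Nodup := (List.nodup_append'.mp hLv).1
      have haL : (Γ.ends e).1 ∉ L.map Γ.stepSrc := by
        intro h
        exact (List.nodup_append'.mp hLv).2.2 h (by simp)
      have hvertsL₂ : (L₂.map Γ.stepSrc ++ [(Γ.ends e).1]).Nodup := by
        rw [hLsplit, List.map_append, List.append_assoc, List.nodup_append'] at hLv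
        exact hLv.2.1
      have hsrcsLnd' := hsrcsLnd
      rw [hLsplit, List.map_append, List.nodup_append'] at hsrcsLnd'
      have hsrcsL₁nd : (L₁.map Γ.stepSrc).Nodup := hsrcsLnd'.1
      have hsrcsL₂nd : (L₂.map Γ.stepSrc).Nodup := hsrcsLnd'.2.1
      have hsrcsdisj : ∀ z ∈ L₁.map Γ.stepSrc, z ∉ L₂.map Γ.stepSrc :=
        fun z hz hz' => hsrcsLnd'.2.2 hz hz'
      have haL₁ : (Γ.ends e).1 ∉ L₁.map Γ.stepSrc := by
        intro h
        refine haL ?_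
        rw [hLsplit, List.map_append]
        exact List.mem_append_left _ h
      have htgtL₂nd : (L₂.map Γ.stepTgt).Nodup := by
        rw [isWL_srcs_shift hWL₂] at hvertsL₂
        exact (List.nodup_cons.mp hvertsL₂).2
      have hsrcsRevL₂nd : ((revL L₂).map Γ.stepSrc).Nodup := by
        rw [map_src_revL, List.nodup_reverse]
        exact htgtL₂nd
      have hsrcsM₁nd : (M₁.map Γ.stepSrc).Nodup := by
        rw [hMsplit, List.map_append, List.nodup_append'] at hsrcsRevL₂nd
        exact hsrcsRevL₂nd.1
      have hqM₁ : q ∉ M₁.map Γ.stepSrc := fun h => hcleanM q h hqS₂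
      have hvertsM₁ : (M₁.map Γ.stepSrc ++ [q]).Nodup := by
        rw [List.nodup_append']
        refine ⟨hsrcsM₁nd, by simp, ?_⟩
        intro z hz
        simp only [List.mem_singleton]
        rintro rfl
        exact hqM₁ hz
      have htgtM₁nd : (M₁.map Γ.stepTgt).Nodup := by
        rw [isWL_srcs_shift hM₁] at hvertsM₁
        exact (List.nodup_cons.mp hvertsM₁).2
      have hmemM₁sub : ∀ z ∈ M₁.map Γ.stepSrc,
          z ∈ L₂.map Γ.stepSrc ++ [(Γ.ends e).1] := by
        intro z hz
        have h1 : z ∈ (revL L₂).map Γ.stepSrc := by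
          rw [hMsplit, List.map_append]
          exact List.mem_append_left _ hz
        rw [map_src_revL, List.mem_reverse] at h1
        exact mem_tgt_sub hWL₂ h1
      have hsrcsR₂sub : ∀ z ∈ (revL M₁).map Γ.stepSrc, z ∈ M₁.map Γ.stepSrc ++ [q] := by
        intro z hz
        rw [map_src_revL, List.mem_reverse] at hz
        exact mem_tgt_sub hM₁ hz
      have haM₁val : (Γ.ends e).1 ∈ S₂ → q = (Γ.ends e).1 := by
        intro haS₂
        by_cases hM₁nil : M₁ = []
        · rw [hM₁nil] at hM₁
          exact hM₁.symm
        · exact absurd ((head_src_mem hM₁ hM₁nil)) fun h => hcleanM _ h haS₂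
      have haR₂ : (Γ.ends e).1 ∉ (revL M₁).map Γ.stepSrc := by
        intro h
        rw [map_src_revL, List.mem_reverse] at h
        have hvertsM₁' := hvertsM₁
        rw [isWL_srcs_shift hM₁] at hvertsM₁'
        exact (List.nodup_cons.mp hvertsM₁').1 h
      -- p ≠ q
      have hpq : p ≠ q := by
        intro hpq'
        subst hpq'
        have hMidnil : revL M₂ = [] := by
          refine closed_mid_nil hWL₁ hMid hR₂ ?_
          rw [List.append_assoc, ← hL₂eq, ← hLsplit]
          exact hLv
        have hL₂R : L₂ = revL M₁ := by
          rw [hL₂eq, hMidnil, List.nil_append]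
        have hall : ∀ z, z ∈ S₁ → z ∈ S₂ → z = p := by
          intro z hzS₁ hzS₂
          rcases List.mem_append.mp ((hS₁L z).mp hzS₁) with hz | hz
          · rw [hLsplit, List.map_append] at hz
            rcases List.mem_append.mp hz with hz | hz
            · exact absurd hzS₂ (hclean₁ z hz)
            · rw [hL₂R] at hz
              rcases List.mem_append.mp (hsrcsR₂sub z hz) with hz' | hz'
              · exact absurd hzS₂ (hcleanM z hz')
              · simpa using hz'
          · simp only [List.mem_singleton] at hz
            subst hz
            exact (haM₁val hzS₂).symm
        exact hyx ((hall y hy₁ hy₂).trans (hall x hx₁ hx₂).symm)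
      -- rotation of the second cycle and the arc through e'
      obtain ⟨r, hr, hrne, hrS, hrE, hrsgn, hrmemS, hrmemE, hrcount⟩ :=
        rot_cyc e' he'B he'm hpS₂
      have hqr : q ∈ r.map Γ.stepSrc := (hrmemS q).mpr hqS₂
      obtain ⟨A₁, A₂, hrsplit, hA₁, hA₂, hqA₂⟩ := exists_split_at_src r p p hr hqr
      have hA₁ne : A₁ ≠ [] := by
        intro h
        rw [h] at hA₁
        exact hpq hA₁
      have hpA₁ : p ∈ A₁.map Γ.stepSrc := head_src_mem hA₁ hA₁ne
      have hrS' := hrS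
      rw [hrsplit, List.map_append, List.nodup_append'] at hrS'
      have hsplitS : ∀ z ∈ A₁.map Γ.stepSrc, z ∉ A₂.map Γ.stepSrc :=
        fun z hz hz' => hrS'.2.2 hz hz'
      have hqA₁ : q ∉ A₁.map Γ.stepSrc := fun h => hsplitS q h hqA₂
      have hpA₂ : p ∉ A₂.map Γ.stepSrc := fun h => hsplitS p hpA₁ h
      have hvertsA₂ : (A₂.map Γ.stepSrc ++ [p]).Nodup := by
        rw [List.nodup_append']
        refine ⟨hrS'.2.1, by simp, ?_⟩
        intro z hz
        simp only [List.mem_singleton]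
        rintro rfl
        exact hpA₂ hz
      have htgtA₂nd : (A₂.map Γ.stepTgt).Nodup := by
        rw [isWL_srcs_shift hA₂] at hvertsA₂
        exact (List.nodup_cons.mp hvertsA₂).2
      have hqtgtA₂ : q ∉ A₂.map Γ.stepTgt := by
        have hvertsA₂' := hvertsA₂
        rw [isWL_srcs_shift hA₂] at hvertsA₂'
        exact (List.nodup_cons.mp hvertsA₂').1
      have hrE' := hrE
      rw [hrsplit, List.map_append, List.nodup_append'] at hrE'
      have he'r : e' ∈ r.map Prod.fst := (hrmemE e').mpr (by rw [cycL_edges]; simp)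
      have hrsgn' : Γ.sgnL A₁ * Γ.sgnL A₂ = -1 := by
        rw [← sgnL_append, ← hrsplit]
        exact hrsgn
      have hredges : ∀ g ∈ r.map Prod.fst, g = e' ∨ g ∈ Γ.B0 :=
        fun g hg => hsub₂ g ((hrmemE g).mp hg)
      have hedgesA₁r : ∀ g ∈ A₁.map Prod.fst, g ∈ r.map Prod.fst := by
        intro g hg
        rw [hrsplit, List.map_append]
        exact List.mem_append_left _ hg
      have hedgesA₂r : ∀ g ∈ A₂.map Prod.fst, g ∈ r.map Prod.fst := by
        intro g hg
        rw [hrsplit, List.map_append]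
        exact List.mem_append_right _ hg
      have hsrcsA₁r : ∀ z ∈ A₁.map Γ.stepSrc, z ∈ r.map Γ.stepSrc := by
        intro z hz
        rw [hrsplit, List.map_append]
        exact List.mem_append_left _ hz
      have hsrcsA₂r : ∀ z ∈ A₂.map Γ.stepSrc, z ∈ r.map Γ.stepSrc := by
        intro z hz
        rw [hrsplit, List.map_append]
        exact List.mem_append_right _ hz
      obtain ⟨arc, harc, harcS, harcq, harcnd, harcE, harcsgn, harcEnd, harcnotE⟩ :
          ∃ arc, Γ.IsWL arc p q ∧ (∀ z ∈ arc.map Γ.stepSrc, z ∈ S₂) ∧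
            q ∉ arc.map Γ.stepSrc ∧ (arc.map Γ.stepSrc).Nodup ∧
            (∀ g ∈ arc.map Prod.fst, g = e' ∨ g ∈ Γ.B0) ∧
            Γ.sgnL arc = -(Γ.tau p * Γ.tau q) ∧ (arc.map Prod.fst).Nodup ∧
            e ∉ arc.map Prod.fst := by
        by_cases he'A₁ : e' ∈ A₁.map Prod.fst
        · have hA₂B0 : ∀ g ∈ A₂.map Prod.fst, g ∈ Γ.B0 := by
            intro g hg
            rcases hredges g (hedgesA₂r g hg) with h | h
            · subst h
              exact absurd hg (hrE'.2.2 he'A₁)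
            · exact h
          have hsgnA₂ : Γ.sgnL A₂ = Γ.tau q * Γ.tau p :=
            sgnL_matched hA₂ fun g hg => b0_matched (hA₂B0 g hg)
          refine ⟨A₁, hA₁, ?_, hqA₁, hrS'.1, ?_, ?_, hrE'.1, ?_⟩
          · intro z hz
            exact (hrmemS z).mp (hsrcsA₁r z hz)
          · intro g hg
            exact hredges g (hedgesA₁r g hg)
          · rw [hsgnA₂] at hrsgn'
            rw [units_solve hrsgn', mul_comm]
          · intro h
            exact hA_e2 ((hrmemE e).mp (hedgesA₁r e h))
        · have he'A₂ : e' ∈ A₂.map Prod.fst := by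
            rw [hrsplit, List.map_append] at he'r
            rcases List.mem_append.mp he'r with h | h
            · exact absurd h he'A₁
            · exact h
          have hA₁B0 : ∀ g ∈ A₁.map Prod.fst, g ∈ Γ.B0 := by
            intro g hg
            rcases hredges g (hedgesA₁r g hg) with h | h
            · subst h
              exact absurd hg he'A₁
            · exact h
          have hsgnA₁ : Γ.sgnL A₁ = Γ.tau p * Γ.tau q :=
            sgnL_matched hA₁ fun g hg => b0_matched (hA₁B0 g hg)
          refine ⟨revL A₂, hA₂.revL, ?_, ?_, ?_, ?_, ?_, ?_, ?_⟩
          · intro z hz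
            rw [map_src_revL, List.mem_reverse] at hz
            rcases List.mem_append.mp (mem_tgt_sub hA₂ hz) with h | h
            · exact (hrmemS z).mp (hsrcsA₂r z h)
            · simp only [List.mem_singleton] at h
              subst h
              exact hpS₂
          · rw [map_src_revL, List.mem_reverse]
            exact hqtgtA₂
          · rw [map_src_revL, List.nodup_reverse]
            exact htgtA₂nd
          · intro g hg
            rw [edges_revL, List.mem_reverse] at hg
            exact hredges g (hedgesA₂r g hg)
          · rw [sgnL_revL]
            rw [hsgnA₁] at hrsgn'
            rw [mul_comm] at hrsgn'
            exact units_solve hrsgn'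
          · rw [edges_revL, List.nodup_reverse]
            exact hrE'.2.1
          · rw [edges_revL, List.mem_reverse]
            intro h
            exact hA_e2 ((hrmemE e).mp (hedgesA₂r e h))
      -- assemble the balanced two-chord cycle D
      have hD : Γ.IsWL ((e, true) :: (L₁ ++ (arc ++ revL M₁))) (Γ.ends e).1 (Γ.ends e).1 :=
        ⟨rfl, hWL₁.append (harc.append hR₂)⟩
      have hsrcsR₂nd : ((revL M₁).map Γ.stepSrc).Nodup := by
        rw [map_src_revL, List.nodup_reverse]
        exact htgtM₁nd
      have hedgesL₁sub : ∀ g ∈ L₁.map Prod.fst, g ∈ L.map Prod.fst := by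
        intro g hg
        rw [hLsplit, List.map_append]
        exact List.mem_append_left _ hg
      have hedgesR₂sub : ∀ g ∈ (revL M₁).map Prod.fst, g ∈ L₂.map Prod.fst := by
        intro g hg
        rw [edges_revL, List.mem_reverse] at hg
        have h1 : g ∈ (revL L₂).map Prod.fst := by
          rw [hMsplit, List.map_append]
          exact List.mem_append_left _ hg
        rw [edges_revL, List.mem_reverse] at h1
        exact h1
      have hedgesL₂sub : ∀ g ∈ L₂.map Prod.fst, g ∈ L.map Prod.fst := by
        intro g hg
        rw [hLsplit, List.map_append]
        exact List.mem_append_right _ hg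
      have hL₁B0 : ∀ g ∈ L₁.map Prod.fst, g ∈ Γ.B0 :=
        fun g hg => hLB0 g (hedgesL₁sub g hg)
      have hR₂B0 : ∀ g ∈ (revL M₁).map Prod.fst, g ∈ Γ.B0 :=
        fun g hg => hLB0 g (hedgesL₂sub g (hedgesR₂sub g hg))
      -- vertex sets
      have hvertsarc : ∀ z, z ∈ arc.map Γ.stepSrc ++ [q] → z ∈ S₂ := by
        intro z hz
        rcases List.mem_append.mp hz with h | h
        · exact harcS z h
        · simp only [List.mem_singleton] at h
          subst h
          exact hqS₂
      have hvertsR₂S₂ : ∀ z, z ∈ (revL M₁).map Γ.stepSrc ++ [(Γ.ends e).1] →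
          z ∈ S₂ → z = q := by
        intro z hz hzS₂
        rcases List.mem_append.mp hz with h | h
        · rcases List.mem_append.mp (hsrcsR₂sub z h) with h' | h'
          · exact absurd hzS₂ (hcleanM z h')
          · simpa using h'
        · simp only [List.mem_singleton] at h
          subst h
          exact (haM₁val hzS₂).symm
      have hvertsL₁S₂ : ∀ z, z ∈ L₁.map Γ.stepSrc ++ [p] → z ∈ S₂ → z = p := by
        intro z hz hzS₂
        rcases List.mem_append.mp hz with h | h
        · exact absurd hzS₂ (hclean₁ z h)
        · simpa using h
      -- srcs of D are nodup
      have hsrcsD : (((e, true) :: (L₁ ++ (arc ++ revL M₁))).map Γ.stepSrc).Nodup := by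
        rw [List.map_cons, List.map_append, List.map_append, List.nodup_cons,
          List.nodup_append', List.nodup_append']
        have hstep : Γ.stepSrc (e, true) = (Γ.ends e).1 := rfl
        refine ⟨?_, hsrcsL₁nd, ⟨harcnd, hsrcsR₂nd, ?_⟩, ?_⟩
        · rw [hstep]
          intro h
          rcases List.mem_append.mp h with h | h
          · exact haL₁ h
          rcases List.mem_append.mp h with h | h
          · by_cases haS₂ : (Γ.ends e).1 ∈ S₂
            · rw [haM₁val haS₂] at harcq
              exact harcq h
            · exact haS₂ (harcS _ h)
          · exact haR₂ h
        · intro z hz hz'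
          have hzS₂ : z ∈ S₂ := harcS z hz
          rcases List.mem_append.mp (hsrcsR₂sub z hz') with h' | h'
          · exact hcleanM z h' hzS₂
          · simp only [List.mem_singleton] at h'
            subst h'
            exact harcq hz
        · intro z hz hz'
          rcases List.mem_append.mp hz' with h | h
          · exact hclean₁ z hz (harcS z h)
          · rcases List.mem_append.mp (hsrcsR₂sub z h) with h' | h'
            · rcases List.mem_append.mp (hmemM₁sub z h') with h'' | h''
              · exact hsrcsdisj z hz h''
              · simp only [List.mem_singleton] at h''
                subst h''
                exact haL₁ hz
            · simp only [List.mem_singleton] at h'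
              subst h'
              exact hclean₁ _ hz hqS₂
      -- edges of D are nodup
      have hedgesD : (((e, true) :: (L₁ ++ (arc ++ revL M₁))).map Prod.fst).Nodup := by
        rw [List.map_cons, List.map_append, List.map_append, List.nodup_cons,
          List.nodup_append', List.nodup_append']
        have hL₁nd : (L₁.map Prod.fst).Nodup := by
          have h := hLE
          rw [hLsplit, List.map_append, List.nodup_append'] at h
          exact h.1
        have hL₂Lnd : (L₂.map Prod.fst).Nodup := by
          have h := hLE
          rw [hLsplit, List.map_append, List.nodup_append'] at h
          exact h.2.1
        have hedgedisjL : ∀ g ∈ L₁.map Prod.fst, g ∉ L₂.map Prod.fst := by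
          have h := hLE
          rw [hLsplit, List.map_append, List.nodup_append'] at h
          exact fun g hg hg' => h.2.2 hg hg'
        have hR₂nd : ((revL M₁).map Prod.fst).Nodup := by
          rw [edges_revL, List.nodup_reverse]
          have h : ((revL L₂).map Prod.fst).Nodup := by
            rw [edges_revL, List.nodup_reverse]
            exact hL₂Lnd
          rw [hMsplit, List.map_append, List.nodup_append'] at h
          exact h.1
        refine ⟨?_, hL₁nd, ⟨harcEnd, hR₂nd, ?_⟩, ?_⟩
        · intro h
          rcases List.mem_append.mp h with h | h
          · exact heB (hL₁B0 e h)
          rcases List.mem_append.mp h with h | h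
          · exact harcnotE h
          · exact heB (hR₂B0 e h)
        · -- arc vs R₂
          intro g hg hg'
          have hgB : g ∈ Γ.B0 := hR₂B0 g hg'
          obtain ⟨ht1, hf1⟩ := endpts_mem_verts harc hg
          obtain ⟨ht2, hf2⟩ := endpts_mem_verts hR₂ hg'
          have e1 : Γ.endpt g true = q :=
            hvertsR₂S₂ _ ht2 (hvertsarc _ ht1)
          have e2 : Γ.endpt g false = q :=
            hvertsR₂S₂ _ hf2 (hvertsarc _ hf1)
          exact b0_not_loop hgB (e1.trans e2.symm)
        · -- L₁ vs (arc ++ R₂)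
          intro g hg hg'
          rcases List.mem_append.mp hg' with h | h
          · have hgB : g ∈ Γ.B0 := hL₁B0 g hg
            obtain ⟨ht1, hf1⟩ := endpts_mem_verts hWL₁ hg
            obtain ⟨ht2, hf2⟩ := endpts_mem_verts harc h
            have e1 : Γ.endpt g true = p :=
              hvertsL₁S₂ _ ht1 (hvertsarc _ ht2)
            have e2 : Γ.endpt g false = p :=
              hvertsL₁S₂ _ hf1 (hvertsarc _ hf2)
            exact b0_not_loop hgB (e1.trans e2.symm)
          · exact hedgedisjL g hg (hedgesR₂sub g h)
      -- sign of D
      have hsgnD : Γ.sgnL ((e, true) :: (L₁ ++ (arc ++ revL M₁))) = 1 := by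
        have hτe : Γ.sign e = -(Γ.tau (Γ.ends e).1 * Γ.tau (Γ.ends e).2) :=
          units_eq_neg_of_ne hem
        have hsgnL₁ : Γ.sgnL L₁ = Γ.tau (Γ.ends e).2 * Γ.tau p :=
          sgnL_matched hWL₁ fun g hg => b0_matched (hL₁B0 g hg)
        have hsgnR₂ : Γ.sgnL (revL M₁) = Γ.tau (Γ.ends e).1 * Γ.tau q := by
          rw [sgnL_revL]
          exact sgnL_matched hM₁ fun g hg => b0_matched (by
            refine hLB0 g (hedgesL₂sub g ?_)
            have h1 : g ∈ (revL L₂).map Prod.fst := by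
              rw [hMsplit, List.map_append]
              exact List.mem_append_left _ hg
            rw [edges_revL, List.mem_reverse] at h1
            exact h1)
        rw [sgnL_cons, sgnL_append, sgnL_append, hτe, hsgnL₁, harcsgn, hsgnR₂]
        rcases Int.units_eq_one_or (Γ.tau (Γ.ends e).1) with h1 | h1 <;>
          rcases Int.units_eq_one_or (Γ.tau (Γ.ends e).2) with h2 | h2 <;>
            rcases Int.units_eq_one_or (Γ.tau p) with h3 | h3 <;>
              rcases Int.units_eq_one_or (Γ.tau q) with h4 | h4 <;>
                rw [h1, h2, h3, h4] <;> simp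
      have hDne : ((e, true) :: (L₁ ++ (arc ++ revL M₁))) ≠ [] := by simp
      have hcirc := isCircuitWalk_balanced _ _ hD hDne hsrcsD hedgesD hsgnD
      have h0 := tension_tsumL hf hD hcirc
      have hcnt : ((((e, true) :: (L₁ ++ (arc ++ revL M₁))).map Prod.fst).count e) = 1 := by
        rw [List.map_cons, List.count_cons_self, List.map_append, List.map_append]
        have hz : ((L₁.map Prod.fst ++ (arc.map Prod.fst ++ (revL M₁).map Prod.fst)).count e)
            = 0 := by
          rw [List.count_eq_zero]
          intro h
          rcases List.mem_append.mp h with h | h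
          · exact heB (hL₁B0 e h)
          rcases List.mem_append.mp h with h | h
          · exact harcnotE h
          · exact heB (hR₂B0 e h)
        omega
      have hzero : ∀ g ∈ ((e, true) :: (L₁ ++ (arc ++ revL M₁))).map Prod.fst, g ≠ e →
          f g = 0 := by
        intro g hg hgne
        rw [List.map_cons, List.mem_cons] at hg
        rcases hg with h | h
        · exact absurd h hgne
        rw [List.map_append, List.map_append] at h
        refine hZ g ?_
        rcases List.mem_append.mp h with h | h
        · exact Or.inl (hL₁B0 g h)
        rcases List.mem_append.mp h with h | h
        · rcases harcE g h with h' | h'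
          exacts [Or.inr h', Or.inl h']
        · exact Or.inl (hR₂B0 g h)
      obtain ⟨u, hu⟩ := tsumL_single_count ω f e _ hcnt hzero
      rw [h0] at hu
      exact units_smul_eq_zero hu.symm


/-! ### The parametrization of tensions and potential differences -/

lemma neg_one_ne_one : (-1 : ℤˣ) ≠ 1 := by
  intro h
  have := congrArg (fun u : ℤˣ => (u : ℤ)) h
  norm_num at this

section Params

variable {G : Type} [AddCommGroup G]

/-- The potential on signed vertices determined by parameters `ψ`, `κ`. -/
noncomputable def Phi (Γ : SGraph V E) (ψ : V → G) (κ : Γ.Components → G) (v : V)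
    (ε : ℤˣ) : G :=
  if ε = Γ.tau v then ψ v else κ (Γ.comp v) - ψ v

/-- The edge function determined by parameters `ψ`, `κ`. -/
noncomputable def fOf (Γ : SGraph V E) (ω : E → Bool → ℤˣ) (ψ : V → G)
    (κ : Γ.Components → G) : E → G := fun e =>
  (ω e true : ℤ) • (Γ.Phi ψ κ (Γ.ends e).2 (Γ.sign e) - Γ.Phi ψ κ (Γ.ends e).1 1)

variable {ψ : V → G} {κ : Γ.Components → G} {ω : E → Bool → ℤˣ}

lemma phi_sum (v : V) (ε : ℤˣ) :
    Γ.Phi ψ κ v ε + Γ.Phi ψ κ v (-ε) = κ (Γ.comp v) := by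
  unfold SGraph.Phi
  by_cases h : ε = Γ.tau v
  · have h' : ¬ (-ε = Γ.tau v) := by
      rw [← h]
      intro h''
      rcases Int.units_eq_one_or ε with h1 | h1 <;> rw [h1] at h'' <;>
        first
          | exact neg_one_ne_one h''
          | exact neg_one_ne_one h''.symm
    rw [if_pos h, if_neg h']
    abel
  · have h' : -ε = Γ.tau v := by
      have := units_eq_neg_of_ne h
      rw [this, neg_neg]
    rw [if_neg h, if_pos h']
    abel

lemma fOf_star_one (e : E) :
    Γ.Phi ψ κ (Γ.ends e).2 (1 * Γ.sign e) =
      Γ.Phi ψ κ (Γ.ends e).1 1 + ((1 * ω e true : ℤˣ) : ℤ) • Γ.fOf ω ψ κ e := by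
  rw [one_mul, one_mul]
  unfold SGraph.fOf
  rw [units_smul_smul]
  abel

lemma fOf_star (e : E) (ε : ℤˣ) :
    Γ.Phi ψ κ (Γ.ends e).2 (ε * Γ.sign e) =
      Γ.Phi ψ κ (Γ.ends e).1 ε + ((ε * ω e true : ℤˣ) : ℤ) • Γ.fOf ω ψ κ e := by
  have h1 := fOf_star_one (Γ := Γ) (ψ := ψ) (κ := κ) (ω := ω) e
  rw [one_mul, one_mul] at h1
  rcases Int.units_eq_one_or ε with h | h <;> subst h
  · rw [one_mul, one_mul]
    exact h1
  · have hs2 := phi_sum (Γ := Γ) (ψ := ψ) (κ := κ) (Γ.ends e).2 (Γ.sign e)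
    have hs1 := phi_sum (Γ := Γ) (ψ := ψ) (κ := κ) (Γ.ends e).1 1
    have hcc : Γ.comp (Γ.ends e).1 = Γ.comp (Γ.ends e).2 := comp_edge e
    have hneg : (-1 : ℤˣ) * Γ.sign e = -(Γ.sign e) := by rw [neg_mul, one_mul]
    rw [hneg]
    have e2 : Γ.Phi ψ κ (Γ.ends e).2 (-(Γ.sign e)) =
        κ (Γ.comp (Γ.ends e).2) - Γ.Phi ψ κ (Γ.ends e).2 (Γ.sign e) := by
      rw [← hs2]
      abel
    have e1 : Γ.Phi ψ κ (Γ.ends e).1 (-1) =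
        κ (Γ.comp (Γ.ends e).1) - Γ.Phi ψ κ (Γ.ends e).1 1 := by
      rw [← hs1]
      abel
    rw [e2, e1, h1, hcc]
    have hcoe : ((-1 * ω e true : ℤˣ) : ℤ) • Γ.fOf ω ψ κ e =
        -(((ω e true : ℤˣ) : ℤ) • Γ.fOf ω ψ κ e) := by
      push_cast
      rw [neg_one_mul, neg_smul]
    rw [hcoe]
    abel

lemma fOf_step (hω : Γ.IsCompatible ω) (s : E × Bool) (ε : ℤˣ) :
    Γ.Phi ψ κ (Γ.stepTgt s) (ε * Γ.sign s.1) =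
      Γ.Phi ψ κ (Γ.stepSrc s) ε + ((ε * ω s.1 s.2 : ℤˣ) : ℤ) • Γ.fOf ω ψ κ s.1 := by
  rcases s with ⟨e, d⟩
  cases d
  · -- reversed direction
    have h := fOf_star (Γ := Γ) (ψ := ψ) (κ := κ) (ω := ω) e (ε * Γ.sign e)
    rw [mul_assoc, units_sq, mul_one] at h
    have hTgt : Γ.stepTgt (e, false) = (Γ.ends e).1 := rfl
    have hSrc : Γ.stepSrc (e, false) = (Γ.ends e).2 := rfl
    rw [hTgt, hSrc]
    have hω' : ω e false = -(Γ.sign e * ω e true) := by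
      have := omega_not hω e true
      simpa using this
    rw [h]
    have hcoe : ((ε * ω e false : ℤˣ) : ℤ) • Γ.fOf ω ψ κ e =
        -(((ε * Γ.sign e * ω e true : ℤˣ) : ℤ) • Γ.fOf ω ψ κ e) := by
      rw [hω']
      push_cast
      rw [← neg_smul]
      congr 1
      ring
    rw [hcoe]
    abel
  · exact fOf_star e ε

lemma fOf_telescope (hω : Γ.IsCompatible ω) :
    ∀ (l : List (E × Bool)) (u v : V), Γ.IsWL l u v → ∀ ε : ℤˣ,
      Γ.Phi ψ κ v (ε * Γ.sgnL l) =
        Γ.Phi ψ κ u ε + (ε : ℤ) • Γ.tsumL ω (Γ.fOf ω ψ κ) l := by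
  intro l
  induction l with
  | nil =>
    intro u v h ε
    subst h
    simp
  | cons s l ih =>
    intro u v h ε
    rw [sgnL_cons, tsumL_cons]
    have hstep := fOf_step (ψ := ψ) (κ := κ) hω s ε
    have hih := ih (Γ.stepTgt s) v h.2 (ε * Γ.sign s.1)
    rw [← mul_assoc, hih, hstep, h.1]
    rw [smul_add]
    push_cast
    rw [mul_smul, mul_smul]
    abel

lemma fOf_isTension (hω : Γ.IsCompatible ω) : Γ.IsTension ω (Γ.fOf ω ψ κ) := by
  intro v W hW
  rw [Walk.tensionSum_eq_tsumL]
  have h1 := fOf_telescope (ψ := ψ) (κ := κ) hω W.steps v v W.steps_isWL 1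
  rw [hW.sgnL_steps, mul_one, Units.val_one, one_smul] at h1
  exact left_eq_add.mp h1

lemma fOf_unbalanced_sum (hω : Γ.IsCompatible ω) (hκ : ∀ c, κ c ∈ twoG G) {v : V}
    (W : Γ.Walk v v) (hW : Γ.IsUnbalancedCycle W) :
    W.edgeSum (Γ.fOf ω ψ κ) ∈ twoG G := by
  have hsgn : Γ.sgnL W.steps = -1 := by
    rw [← Walk.sgn_eq_sgnL]
    exact hW.2
  have h1 := fOf_telescope (ψ := ψ) (κ := κ) hω W.steps v v W.steps_isWL 1
  rw [hsgn, one_mul, Units.val_one, one_smul] at h1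
  have hts : Γ.tsumL ω (Γ.fOf ω ψ κ) W.steps =
      Γ.Phi ψ κ v (-1 : ℤˣ) - Γ.Phi ψ κ v 1 := by
    rw [h1]
    abel
  have hsum := phi_sum (Γ := Γ) (ψ := ψ) (κ := κ) v 1
  have hts2 : Γ.tsumL ω (Γ.fOf ω ψ κ) W.steps =
      κ (Γ.comp v) - (Γ.Phi ψ κ v 1 + Γ.Phi ψ κ v 1) := by
    rw [hts, ← hsum]
    abel
  have htsmem : Γ.tsumL ω (Γ.fOf ω ψ κ) W.steps ∈ twoG G := by
    rw [hts2]
    exact (twoG G).sub_mem (hκ _) ⟨Γ.Phi ψ κ v 1, rfl⟩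
  have hdiff := tsumL_sub_sum_mem (Γ := Γ) (Γ.fOf ω ψ κ) ω W.steps
  have : W.edgeSum (Γ.fOf ω ψ κ) =
      Γ.tsumL ω (Γ.fOf ω ψ κ) W.steps -
        (Γ.tsumL ω (Γ.fOf ω ψ κ) W.steps - (W.steps.map fun s => Γ.fOf ω ψ κ s.1).sum) := by
    rw [Walk.edgeSum_eq]
    abel
  rw [this]
  exact (twoG G).sub_mem htsmem hdiff

lemma fOf_psi_rec (hω : Γ.IsCompatible ω) (hψ : ∀ v, ψ (Γ.rt v) = 0) (v : V) :
    ψ v = Γ.tsumL ω (Γ.fOf ω ψ κ) (revL (Γ.plist v)) := by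
  have h1 := fOf_telescope (ψ := ψ) (κ := κ) hω (revL (Γ.plist v)) (Γ.rt v) v
    (plist_isWL v).revL 1
  rw [one_mul, Units.val_one, one_smul, sgnL_revL] at h1
  have htau : Γ.sgnL (Γ.plist v) = Γ.tau v := rfl
  rw [htau] at h1
  have h2 : Γ.Phi ψ κ v (Γ.tau v) = ψ v := if_pos rfl
  have h3 : Γ.Phi ψ κ (Γ.rt v) 1 = 0 := by
    unfold SGraph.Phi
    rw [if_pos (by rw [tau_rt (Γ.rt v) (rt_rt v).symm])]
    exact hψ v
  rw [h2, h3, zero_add] at h1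
  exact h1

/-- The canonical negative closed walk at the root of an unbalanced component. -/
noncomputable def negLoop (Γ : SGraph V E) (c : Γ.Components)
    (hc : ¬ Γ.IsBalancedComponent c) : List (E × Bool) :=
  revL (Γ.plist (Γ.ends (Γ.mismatchE c hc)).1) ++
    (Γ.cycL (Γ.mismatchE c hc) ++ Γ.plist (Γ.ends (Γ.mismatchE c hc)).1)

lemma negLoop_isWL (c : Γ.Components) (hc : ¬ Γ.IsBalancedComponent c) :
    Γ.IsWL (Γ.negLoop c hc) (Γ.rt (Γ.ends (Γ.mismatchE c hc)).1)
      (Γ.rt (Γ.ends (Γ.mismatchE c hc)).1) :=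
  (plist_isWL _).revL.append ((cycL_isWL _).append (plist_isWL _))

lemma negLoop_sgn (c : Γ.Components) (hc : ¬ Γ.IsBalancedComponent c) :
    Γ.sgnL (Γ.negLoop c hc) = -1 := by
  unfold SGraph.negLoop
  rw [sgnL_append, sgnL_append, sgnL_revL, cycL_sgn_mismatched _ (mismatchE_not_matched c hc)]
  rcases Int.units_eq_one_or (Γ.sgnL (Γ.plist (Γ.ends (Γ.mismatchE c hc)).1)) with h | h <;>
    rw [h] <;> simp

lemma fOf_kappa_rec (hω : Γ.IsCompatible ω) (hψ : ∀ v, ψ (Γ.rt v) = 0)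
    (c : Γ.Components) (hc : ¬ Γ.IsBalancedComponent c) :
    κ c = Γ.tsumL ω (Γ.fOf ω ψ κ) (Γ.negLoop c hc) := by
  set v₀ := (Γ.ends (Γ.mismatchE c hc)).1 with hv₀
  have h1 := fOf_telescope (ψ := ψ) (κ := κ) hω (Γ.negLoop c hc) (Γ.rt v₀) (Γ.rt v₀)
    (negLoop_isWL c hc) 1
  rw [negLoop_sgn c hc, one_mul, Units.val_one, one_smul] at h1
  have h3 : Γ.Phi ψ κ (Γ.rt v₀) 1 = 0 := by
    unfold SGraph.Phi
    rw [if_pos (by rw [tau_rt (Γ.rt v₀) (rt_rt v₀).symm])]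
    exact hψ v₀
  have h4 : Γ.Phi ψ κ (Γ.rt v₀) (-1 : ℤˣ) = κ c := by
    unfold SGraph.Phi
    rw [if_neg (by rw [tau_rt (Γ.rt v₀) (rt_rt v₀).symm]; exact neg_one_ne_one)]
    rw [hψ v₀, sub_zero]
    congr 1
    rw [comp_rt]
    exact mismatchE_comp c hc
  rw [h3, zero_add] at h1
  rw [← h4, h1]

lemma fOf_injective (hω : Γ.IsCompatible ω) {ψ ψ' : V → G} {κ κ' : Γ.Components → G}
    (hψ : ∀ v, ψ (Γ.rt v) = 0) (hψ' : ∀ v, ψ' (Γ.rt v) = 0)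
    (hκ : ∀ c, Γ.IsBalancedComponent c → κ c = 0)
    (hκ' : ∀ c, Γ.IsBalancedComponent c → κ' c = 0)
    (heq : Γ.fOf ω ψ κ = Γ.fOf ω ψ' κ') : ψ = ψ' ∧ κ = κ' := by
  constructor
  · funext v
    rw [fOf_psi_rec (κ := κ) hω hψ v, fOf_psi_rec (κ := κ') hω hψ' v]
    exact congrArg (fun f => Γ.tsumL ω f (revL (Γ.plist v))) heq
  · funext c
    by_cases hc : Γ.IsBalancedComponent c
    · rw [hκ c hc, hκ' c hc]
    · rw [fOf_kappa_rec (κ := κ) hω hψ c hc, fOf_kappa_rec (κ := κ') hω hψ' c hc]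
      exact congrArg (fun f => Γ.tsumL ω f (Γ.negLoop c hc)) heq

end Params


/-! ### Counting -/

lemma sum_map_sub {G : Type} [AddCommGroup G] (f g : E → G) (l : List E) :
    (l.map (f - g)).sum = (l.map f).sum - (l.map g).sum := by
  induction l with
  | nil => simp
  | cons e l ih =>
    simp only [List.map_cons, List.sum_cons, ih, Pi.sub_apply]
    abel

lemma isTension_sub {G : Type} [AddCommGroup G] {ω : E → Bool → ℤˣ} {f₁ f₂ : E → G}
    (h₁ : Γ.IsTension ω f₁) (h₂ : Γ.IsTension ω f₂) : Γ.IsTension ω (f₁ - f₂) := by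
  intro v W hW
  rw [Walk.tensionSum_eq_tsumL, tsumL_sub]
  have e1 := h₁ v W hW
  have e2 := h₂ v W hW
  rw [Walk.tensionSum_eq_tsumL] at e1 e2
  rw [e1, e2, sub_zero]

lemma edgeSum_sub {G : Type} [AddCommGroup G] (f₁ f₂ : E → G) {u v : V} (W : Γ.Walk u v) :
    W.edgeSum (f₁ - f₂) = W.edgeSum f₁ - W.edgeSum f₂ := by
  unfold Walk.edgeSum
  exact sum_map_sub f₁ f₂ W.edges

section Counting

variable [Finite V] [Finite E]

lemma finite_components : Finite Γ.Components :=
  Finite.of_surjective Γ.comp fun c => ⟨Γ.crep c, comp_crep c⟩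

/-- Functions vanishing on a constrained set. -/
noncomputable def zeroOnEquiv {α W : Type} [Zero W] (P : α → Prop) :
    {g : α → W // ∀ a, P a → g a = 0} ≃ ({a // ¬ P a} → W) where
  toFun g := fun a => g.1 a.1
  invFun h := ⟨fun a => if hp : P a then 0 else h ⟨a, hp⟩, fun a hpa => dif_pos hpa⟩
  left_inv g := by
    apply Subtype.ext
    funext a
    show (if hp : P a then (0 : W) else g.1 a) = g.1 a
    by_cases hp : P a
    · rw [dif_pos hp, g.2 a hp]
    · rw [dif_neg hp]
  right_inv h := by
    funext a
    show (if hp : P a.1 then (0 : W) else h ⟨a.1, hp⟩) = h a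
    rw [dif_neg a.2]

lemma card_zeroOn {α W : Type} [Finite α] [Zero W] (P : α → Prop) :
    Nat.card {g : α → W // ∀ a, P a → g a = 0} = Nat.card W ^ Nat.card {a // ¬ P a} := by
  rw [Nat.card_congr (zeroOnEquiv P), Nat.card_fun]

noncomputable def rtFixed_equiv_components : {v : V // Γ.rt v = v} ≃ Γ.Components where
  toFun v := Γ.comp v.1
  invFun c := ⟨Γ.crep c, rt_crep c⟩
  left_inv v := Subtype.ext v.2
  right_inv c := comp_crep c

lemma card_not_rt : Nat.card {v : V // ¬ (Γ.rt v = v)} = Nat.card V - Γ.kAll := by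
  classical
  haveI := Fintype.ofFinite V
  have h1 : Γ.kAll = Nat.card {v : V // Γ.rt v = v} :=
    (Nat.card_congr rtFixed_equiv_components).symm
  rw [h1, Nat.card_eq_fintype_card, Nat.card_eq_fintype_card, Nat.card_eq_fintype_card,
    Fintype.card_subtype_compl]

lemma card_psi {W : Type} [Zero W] :
    Nat.card {g : V → W // ∀ v, g (Γ.rt v) = 0} =
      Nat.card W ^ (Nat.card V - Γ.kAll) := by
  have hequiv : {g : V → W // ∀ v, g (Γ.rt v) = 0} ≃
      {g : V → W // ∀ v, Γ.rt v = v → g v = 0} := by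
    refine Equiv.subtypeEquivRight fun g => ⟨fun h v hv => ?_, fun h v => h _ (rt_rt v)⟩
    rw [← hv]
    exact h v
  rw [Nat.card_congr hequiv, card_zeroOn, card_not_rt]

lemma card_kappa {W : Type} [Zero W] :
    Nat.card {g : Γ.Components → W // ∀ c, Γ.IsBalancedComponent c → g c = 0} =
      Nat.card W ^ Γ.ku := by
  haveI : Finite Γ.Components := finite_components
  rw [card_zeroOn]
  rfl

lemma card_b0 : Nat.card (↥Γ.B0) = Nat.card V - Γ.kAll := by
  have hb : Function.Bijective (fun v : {v : V // ¬ (Γ.rt v = v)} =>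
      (⟨(Γ.pstep v.1 fun h => v.2 h.symm).1, ⟨v.1, fun h => v.2 h.symm, rfl⟩⟩ : ↥Γ.B0)) := by
    constructor
    · intro v w h
      apply Subtype.ext
      exact pstep_fst_inj _ _ (congrArg Subtype.val h)
    · rintro ⟨g, v, hv, rfl⟩
      exact ⟨⟨v, fun h => hv h.symm⟩, rfl⟩
  rw [← Nat.card_congr (Equiv.ofBijective _ hb), card_not_rt]

lemma kb_add_ku : Γ.kb + Γ.ku = Γ.kAll := by
  classical
  haveI : Finite Γ.Components := finite_components
  haveI := Fintype.ofFinite Γ.Components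
  have h1 : Γ.kb = Fintype.card {c : Γ.Components // Γ.IsBalancedComponent c} :=
    Nat.card_eq_fintype_card
  have h2 : Γ.ku = Fintype.card {c : Γ.Components // ¬ Γ.IsBalancedComponent c} :=
    Nat.card_eq_fintype_card
  have h3 : Γ.kAll = Fintype.card Γ.Components := Nat.card_eq_fintype_card
  rw [h1, h2, h3, Fintype.card_subtype_compl]
  have := Fintype.card_subtype_le (fun c : Γ.Components => Γ.IsBalancedComponent c)
  omega

lemma kAll_le_cardV : Γ.kAll ≤ Nat.card V :=
  Nat.card_le_card_of_surjective Γ.comp fun c => ⟨Γ.crep c, comp_crep c⟩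

variable {G : Type} [AddCommGroup G] [Finite G] {ω : E → Bool → ℤˣ}

/-- Counting tensions. -/
lemma card_tensions (hω : Γ.IsCompatible ω) :
    Nat.card {f : E → G // Γ.IsTension ω f} =
      Nat.card G ^ (Nat.card V - Γ.kAll) * Nat.card G ^ Γ.ku := by
  haveI : Finite Γ.Components := finite_components
  have hlow : Nat.card
      {p : (V → G) × (Γ.Components → G) //
        (∀ v, p.1 (Γ.rt v) = 0) ∧ ∀ c, Γ.IsBalancedComponent c → p.2 c = 0} ≤
      Nat.card {f : E → G // Γ.IsTension ω f} := by
    refine Nat.card_le_card_of_injective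
      (fun p => ⟨Γ.fOf ω p.1.1 p.1.2, fOf_isTension hω⟩) ?_
    intro p q h
    rw [Subtype.ext_iff] at h
    obtain ⟨h1, h2⟩ := fOf_injective hω p.2.1 q.2.1 p.2.2 q.2.2 h
    exact Subtype.ext (Prod.ext h1 h2)
  have hhigh : Nat.card {f : E → G // Γ.IsTension ω f} ≤
      Nat.card ((↥Γ.B0 → G) × ({c : Γ.Components // ¬ Γ.IsBalancedComponent c} → G)) := by
    refine Nat.card_le_card_of_injective
      (fun f => (fun b => f.1 b.1, fun c => f.1 (Γ.mismatchE c.1 c.2))) ?_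
    intro f₁ f₂ h
    rw [Prod.ext_iff] at h
    apply Subtype.ext
    have hzero := hardcore (isTension_sub f₁.2 f₂.2)
      (fun g hg => by
        have := congrFun h.1 ⟨g, hg⟩
        simpa [sub_eq_zero] using this)
      (fun c hc => by
        have := congrFun h.2 ⟨c, hc⟩
        simpa [sub_eq_zero] using this)
    funext g
    have := hzero g
    rw [Pi.sub_apply, sub_eq_zero] at this
    exact this
  have hcardP : Nat.card
      {p : (V → G) × (Γ.Components → G) //
        (∀ v, p.1 (Γ.rt v) = 0) ∧ ∀ c, Γ.IsBalancedComponent c → p.2 c = 0} =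
      Nat.card G ^ (Nat.card V - Γ.kAll) * Nat.card G ^ Γ.ku := by
    rw [Nat.card_congr (Equiv.subtypeProdEquivProd
      (p := fun ψ : V → G => ∀ v, ψ (Γ.rt v) = 0)
      (q := fun κ : Γ.Components → G => ∀ c, Γ.IsBalancedComponent c → κ c = 0)),
      Nat.card_prod, card_psi, card_kappa]
  have hcardU : Nat.card
      ((↥Γ.B0 → G) × ({c : Γ.Components // ¬ Γ.IsBalancedComponent c} → G)) =
      Nat.card G ^ (Nat.card V - Γ.kAll) * Nat.card G ^ Γ.ku := by
    rw [Nat.card_prod, Nat.card_fun, Nat.card_fun, card_b0]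
    rfl
  rw [hcardP] at hlow
  rw [hcardU] at hhigh
  exact le_antisymm hhigh hlow

/-- Counting potential differences. -/
lemma card_pds (hω : Γ.IsCompatible ω) :
    Nat.card {f : E → G // Γ.IsPotentialDifference ω f} =
      Nat.card G ^ (Nat.card V - Γ.kAll) * Nat.card (twoG G) ^ Γ.ku := by
  haveI : Finite Γ.Components := finite_components
  have hlow : Nat.card
      {p : (V → G) × (Γ.Components → ↥(twoG G)) //
        (∀ v, p.1 (Γ.rt v) = 0) ∧ ∀ c, Γ.IsBalancedComponent c → p.2 c = 0} ≤
      Nat.card {f : E → G // Γ.IsPotentialDifference ω f} := by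
    refine Nat.card_le_card_of_injective
      (fun p => ⟨Γ.fOf ω p.1.1 (fun c => (p.1.2 c : G)),
        fOf_isTension hω,
        fun v W hW => fOf_unbalanced_sum hω (fun c => (p.1.2 c).2) W hW⟩) ?_
    intro p q h
    rw [Subtype.ext_iff] at h
    obtain ⟨h1, h2⟩ := fOf_injective hω p.2.1 q.2.1
      (fun c hc => by rw [p.2.2 c hc]; rfl)
      (fun c hc => by rw [q.2.2 c hc]; rfl) h
    refine Subtype.ext (Prod.ext h1 ?_)
    funext c
    exact Subtype.ext (congrFun h2 c)
  have hhigh : Nat.card {f : E → G // Γ.IsPotentialDifference ω f} ≤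
      Nat.card ((↥Γ.B0 → G) ×
        ({c : Γ.Components // ¬ Γ.IsBalancedComponent c} → ↥(twoG G))) := by
    refine Nat.card_le_card_of_injective (fun f =>
      (fun b => f.1 b.1,
       fun c => ⟨(Γ.toWalk _ _ _ (cycL_isWL (Γ.mismatchE c.1 c.2))).edgeSum f.1,
         f.2.2 _ _ (isUnbalancedCycle_toWalk _ _ _ (cycL_ne_nil _) (cycL_srcs_nodup _)
           (cycL_edges_nodup _ (not_matched_not_b0 (mismatchE_not_matched c.1 c.2)))
           (cycL_sgn_mismatched _ (mismatchE_not_matched c.1 c.2)))⟩)) ?_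
    intro f₁ f₂ h
    rw [Prod.ext_iff] at h
    apply Subtype.ext
    have hB0diff : ∀ g ∈ Γ.B0, (f₁.1 - f₂.1) g = 0 := fun g hg => by
      have := congrFun h.1 ⟨g, hg⟩
      simpa [sub_eq_zero] using this
    have hecdiff : ∀ (c : Γ.Components) (hc : ¬ Γ.IsBalancedComponent c),
        (f₁.1 - f₂.1) (Γ.mismatchE c hc) = 0 := by
      intro c hc
      have hsum := congrFun h.2 ⟨c, hc⟩
      rw [Subtype.ext_iff] at hsum
      have hEds : (Γ.toWalk _ _ _ (cycL_isWL (Γ.mismatchE c hc))).edgeSum (f₁.1 - f₂.1)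
          = 0 := by
        rw [edgeSum_sub]
        rw [sub_eq_zero]
        exact hsum
      rw [Walk.edgeSum, Walk.edges_eq, steps_toWalk, cycL_edges, List.map_cons,
        List.sum_cons] at hEds
      have htree : (((Γ.tpathL (Γ.ends (Γ.mismatchE c hc)).2
          (Γ.ends (Γ.mismatchE c hc)).1).map Prod.fst).map (f₁.1 - f₂.1)).sum = 0 := by
        refine List.sum_eq_zero ?_
        intro x hx
        obtain ⟨g, hg, rfl⟩ := List.exists_of_mem_map hx
        exact hB0diff g (tpathL_edges_b0 (rt_ends _) g hg)
      rw [htree, add_zero] at hEds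
      exact hEds
    have hzero := hardcore (isTension_sub f₁.2.1 f₂.2.1) hB0diff hecdiff
    funext g
    have := hzero g
    rw [Pi.sub_apply, sub_eq_zero] at this
    exact this
  have hcardP : Nat.card
      {p : (V → G) × (Γ.Components → ↥(twoG G)) //
        (∀ v, p.1 (Γ.rt v) = 0) ∧ ∀ c, Γ.IsBalancedComponent c → p.2 c = 0} =
      Nat.card G ^ (Nat.card V - Γ.kAll) * Nat.card (twoG G) ^ Γ.ku := by
    rw [Nat.card_congr (Equiv.subtypeProdEquivProd
      (p := fun ψ : V → G => ∀ v, ψ (Γ.rt v) = 0)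
      (q := fun κ : Γ.Components → ↥(twoG G) => ∀ c, Γ.IsBalancedComponent c → κ c = 0)),
      Nat.card_prod, card_psi, card_kappa]
  have hcardU : Nat.card
      ((↥Γ.B0 → G) ×
        ({c : Γ.Components // ¬ Γ.IsBalancedComponent c} → ↥(twoG G))) =
      Nat.card G ^ (Nat.card V - Γ.kAll) * Nat.card (twoG G) ^ Γ.ku := by
    rw [Nat.card_prod, Nat.card_fun, Nat.card_fun, card_b0]
    rfl
  rw [hcardP] at hlow
  rw [hcardU] at hhigh
  exact le_antisymm hhigh hlow

end Counting

end SGraph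

end AuxLists











section Statement

open SGraph

/-- Theorem 7.7: the number of `G`-tensions of a signed graph is
`|G|^{|V|−k_b(Σ)}`, and the number of `G`-potential differences is
`|G|^{|V|−k(Σ)}·|2G|^{k_u(Σ)}`. -/
theorem card_tensions_and_potentialDifferences (V E : Type) [Finite V] [Finite E]
    (Γ : SGraph V E) (ω : E → Bool → ℤˣ) (hω : Γ.IsCompatible ω)
    (G : Type) [AddCommGroup G] [Finite G] :
    Nat.card {f : E → G // Γ.IsTension ω f} =
      Nat.card G ^ (Nat.card V - Γ.kb) ∧
    Nat.card {f : E → G // Γ.IsPotentialDifference ω f} =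
      Nat.card G ^ (Nat.card V - Γ.kAll) * Nat.card (twoG G) ^ Γ.ku := by
  constructor
  · rw [card_tensions hω]
    have h1 := kb_add_ku (Γ := Γ)
    have h2 := kAll_le_cardV (Γ := Γ)
    have h3 : Nat.card V - Γ.kAll + Γ.ku = Nat.card V - Γ.kb := by omega
    rw [← pow_add, h3]
  · exact card_pds hω

end Statement
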